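/- arXiv:1509.05461 — 10 statements merged into one kernel-verified Lean document; each statement's English description precedes it below -/
import Mathlib

section
/- Let Q be a magma with two-sided inverses, i.e., a set with a binary operation ·, an element 1, and a map x ↦ x⁻¹ satisfying 1·x = x·1 = x and x·x⁻¹ = x⁻¹·x = 1 for all x ∈ Q. If Q satisfies the left Bol identity (x·(y·x))·z = x·(y·(x·z)) for all x, y, z, then Q is a loop: for all a, b ∈ Q there is a unique x with a·x = b and a unique y with y·a = b. -/
/-- A magma with two-sided inverses satisfying the left Bol
identity is a loop. -/
theorem stmt_4 {Q : Type*} (mul : Q → Q → Q) (one : Q) (inv : Q → Q)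
    (h_one_left : ∀ x, mul one x = x) (h_one_right : ∀ x, mul x one = x)
    (h_inv_right : ∀ x, mul x (inv x) = one)
    (h_inv_left : ∀ x, mul (inv x) x = one)
    (h_lb : ∀ x y z, mul (mul x (mul y x)) z = mul x (mul y (mul x z))) :
    ∀ a b : Q, (∃! x : Q, mul a x = b) ∧ (∃! y : Q, mul y a = b) := by
  -- (inv a · inv a) · a = inv a
  have e1 : ∀ a : Q, mul (mul (inv a) (inv a)) a = inv a := by
    intro a
    have := h_lb (inv a) one a
    rw [h_one_left, h_inv_left, h_one_left, h_one_right] at this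
    exact this
  -- every left translation is surjective
  have surj : ∀ a b : Q, ∃ x, mul a x = b := by
    intro a b
    refine ⟨mul (mul (inv a) (inv a)) (mul a b), ?_⟩
    have h := h_lb a (mul (inv a) (inv a)) b
    rw [e1, h_inv_right, h_one_left] at h
    exact h.symm
  -- a · (inv a · (a · z)) = a · z
  have step1 : ∀ a z : Q, mul a (mul (inv a) (mul a z)) = mul a z := by
    intro a z
    have h := h_lb a (inv a) z
    rw [h_inv_left, h_one_right] at h
    exact h.symm
  -- a · (inv a · w) = w
  have K : ∀ a w : Q, mul a (mul (inv a) w) = w := by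
    intro a w
    obtain ⟨z, rfl⟩ := surj a w
    exact step1 a z
  -- left translations injective
  have injL : ∀ a u v : Q, mul a u = mul a v → u = v := by
    intro a u v h
    obtain ⟨s, rfl⟩ := surj (inv a) u
    obtain ⟨t, rfl⟩ := surj (inv a) v
    rw [K, K] at h
    rw [h]
  -- inv a · (a · w) = w
  have LIP : ∀ a w : Q, mul (inv a) (mul a w) = w := by
    intro a w
    exact injL a _ _ (step1 a w)
  -- (a · (y · a)) · inv a = a · y
  have star : ∀ a y : Q, mul (mul a (mul y a)) (inv a) = mul a y := by
    intro a y
    have h := h_lb a y (inv a)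
    rw [h_inv_right, h_one_right] at h
    exact h
  intro a b
  constructor
  · exact ⟨mul (inv a) b, K a b, fun x hx => by rw [← hx, LIP]⟩
  · refine ⟨mul (inv a) (mul (mul a b) (inv a)), ?_, ?_⟩
    · have h := h_lb (inv a) (mul a b) a
      rw [h_inv_left, h_one_right, LIP] at h
      exact h
    · -- uniqueness: right translations injective
      intro y hy
      have hY := star a y
      rw [hy] at hY
      -- hY : (a · b) · inv a = a · y
      apply injL a
      rw [← hY]
      -- goal : a · (inv a · ((a·b)·inv a)) = (a·b)·inv a  -- after rewriting candidate
      rw [K]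
end

section
/- Let Q be a magma with two-sided inverses, i.e., a set with a binary operation ·, an element 1, and a map x ↦ x⁻¹ satisfying 1·x = x·1 = x and x·x⁻¹ = x⁻¹·x = 1 for all x ∈ Q. If Q satisfies the Moufang identity ((x·y)·x)·z = x·(y·(x·z)) for all x, y, z, then Q is a loop: for all a, b ∈ Q there is a unique x with a·x = b and a unique y with y·a = b. -/
/-- A magma with two-sided inverses satisfying the Moufang
identity (M1) is a loop. -/
theorem stmt_5 {Q : Type*} (mul : Q → Q → Q) (one : Q) (inv : Q → Q)
    (h_one_left : ∀ x, mul one x = x) (h_one_right : ∀ x, mul x one = x)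
    (h_inv_right : ∀ x, mul x (inv x) = one)
    (h_inv_left : ∀ x, mul (inv x) x = one)
    (h_m1 : ∀ x y z, mul (mul (mul x y) x) z = mul x (mul y (mul x z))) :
    ∀ a b : Q, (∃! x : Q, mul a x = b) ∧ (∃! y : Q, mul y a = b) := by
  have L6 : ∀ a0 a1 : Q, mul (mul a0 a1) a0 = mul a0 (mul a1 a0) := fun a0 a1 => (Eq.symm (Eq.trans (Eq.symm (congrArg (fun __W => mul a0 (mul a1 __W)) (h_one_right a0))) (Eq.trans (Eq.symm (h_m1 a0 a1 one)) (h_one_right (mul (mul a0 a1) a0)))))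
  have L9 : ∀ a0 a1 : Q, mul a0 (mul (inv a0) (mul a0 a1)) = mul a0 a1 := fun a0 a1 => (Eq.symm (Eq.trans (Eq.symm (congrArg (fun __W => mul __W a1) (h_one_left a0))) (Eq.trans (Eq.symm (congrArg (fun __W => mul (mul __W a0) a1) (h_inv_right a0))) (h_m1 a0 (inv a0) a1))))
  have L11 : ∀ a0 a1 : Q, mul a0 (mul a1 (mul a0 (inv (mul a0 (mul a1 a0))))) = one := fun a0 a1 => (Eq.trans (Eq.symm (congrArg (fun __W => mul a0 (mul a1 (mul a0 (inv __W)))) (L6 a0 a1))) (Eq.trans (Eq.symm (h_m1 a0 a1 (inv (mul (mul a0 a1) a0)))) (h_inv_right (mul (mul a0 a1) a0))))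
  have L13 : ∀ a0 a1 : Q, mul (mul a1 (mul a0 (inv (mul a0 (mul a1 a0))))) a0 = one := fun a0 a1 => (Eq.trans (Eq.symm (Eq.trans (Eq.trans (congrArg (fun __W => mul (mul a1 (mul a0 (inv (mul a0 (mul a1 a0))))) (mul a0 (mul (mul a1 (mul a0 (inv (mul a0 (mul a1 a0))))) (inv __W)))) (h_one_right (mul a1 (mul a0 (inv (mul a0 (mul a1 a0))))))) (congrArg (fun __W => mul (mul a1 (mul a0 (inv (mul a0 (mul a1 a0))))) (mul a0 __W)) (h_inv_right (mul a1 (mul a0 (inv (mul a0 (mul a1 a0)))))))) (congrArg (fun __W => mul (mul a1 (mul a0 (inv (mul a0 (mul a1 a0))))) __W) (h_one_right a0)))) (Eq.trans (Eq.symm (congrArg (fun __W => mul (mul a1 (mul a0 (inv (mul a0 (mul a1 a0))))) (mul a0 (mul (mul a1 (mul a0 (inv (mul a0 (mul a1 a0))))) (inv (mul (mul a1 (mul a0 (inv (mul a0 (mul a1 a0))))) __W))))) (L11 a0 a1))) (L11 (mul a1 (mul a0 (inv (mul a0 (mul a1 a0))))) a0)))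
  have L14 : ∀ a0 : Q, mul a0 (mul (inv (mul a0 a0)) a0) = one := fun a0 => (Eq.trans (Eq.symm (Eq.trans (L6 a0 (inv (mul a0 (mul one a0)))) (congrArg (fun __W => mul a0 (mul (inv (mul a0 __W)) a0)) (h_one_left a0)))) (Eq.trans (Eq.symm (congrArg (fun __W => mul __W a0) (h_one_left (mul a0 (inv (mul a0 (mul one a0))))))) (L13 a0 one)))
  have L16 : ∀ a0 a1 a2 : Q, mul (mul a0 (mul a1 a0)) a2 = mul a0 (mul a1 (mul a0 a2)) := fun a0 a1 a2 => (Eq.trans (Eq.symm (congrArg (fun __W => mul __W a2) (L6 a0 a1))) (h_m1 a0 a1 a2))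
  have L17 : ∀ a0 a1 : Q, mul a0 (mul (inv (mul a0 a0)) (mul a0 a1)) = a1 := fun a0 a1 => (Eq.symm (Eq.trans (Eq.symm (h_one_left a1)) (Eq.trans (Eq.symm (congrArg (fun __W => mul __W a1) (L14 a0))) (L16 a0 (inv (mul a0 a0)) a1))))
  have L18 : ∀ a0 a1 : Q, mul (inv a0) (mul a0 a1) = a1 := fun a0 a1 => (Eq.symm (Eq.trans (Eq.symm (L17 a0 a1)) (Eq.trans (Eq.symm (congrArg (fun __W => mul a0 (mul (inv (mul a0 a0)) __W)) (L9 a0 a1))) (L17 a0 (mul (inv a0) (mul a0 a1))))))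
  have L19 : ∀ a0 a1 : Q, mul a0 (mul (inv a0) a1) = a1 := fun a0 a1 => (Eq.trans (Eq.trans (Eq.symm (congrArg (fun __W => mul a0 (mul (inv a0) __W)) (L17 a0 a1))) (L9 a0 (mul (inv (mul a0 a0)) (mul a0 a1)))) (L17 a0 a1))
  have L20 : ∀ a0 : Q, inv (inv a0) = a0 := fun a0 => (Eq.symm (Eq.trans (Eq.symm (h_one_right a0)) (Eq.trans (Eq.symm (congrArg (fun __W => mul a0 __W) (h_inv_right (inv a0)))) (L19 a0 (inv (inv a0))))))
  have L25 : ∀ a0 a1 : Q, mul a0 (mul (mul (inv a0) a1) a0) = mul a1 a0 := fun a0 a1 => (Eq.symm (Eq.trans (Eq.symm (congrArg (fun __W => mul __W a0) (L19 a0 a1))) (L6 a0 (mul (inv a0) a1))))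
  have L26 : ∀ a0 a1 : Q, mul (mul a0 (inv a1)) a1 = a0 := fun a0 a1 => (Eq.symm (Eq.trans (Eq.symm (Eq.trans (Eq.trans (L19 a1 (mul a0 (mul (inv a1) a1))) (congrArg (fun __W => mul a0 __W) (h_inv_left a1))) (h_one_right a0))) (Eq.trans (Eq.symm (congrArg (fun __W => mul a1 __W) (L16 (inv a1) a0 a1))) (L25 a1 (mul a0 (inv a1))))))
  have L27 : ∀ a0 a1 : Q, mul (mul a1 a0) (inv a0) = a1 := fun a0 a1 => (Eq.trans (Eq.symm (congrArg (fun __W => mul (mul a1 __W) (inv a0)) (L20 a0))) (L26 a1 (inv a0)))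
  have G0 : ∀ a0 a1 : Q, mul (inv a0) (mul a0 a1) = a1 := fun a0 a1 => (L18 a0 a1)
  have G1 : ∀ a0 a1 : Q, mul a0 (mul (inv a0) a1) = a1 := fun a0 a1 => (L19 a0 a1)
  have G2 : ∀ a0 a1 : Q, mul (mul a1 a0) (inv a0) = a1 := fun a0 a1 => (L27 a0 a1)
  have G3 : ∀ a0 a1 : Q, mul (mul a1 (inv a0)) a0 = a1 := fun a0 a1 => (L26 a1 a0)
  have G4 : ∀ a0 : Q, inv (inv a0) = a0 := fun a0 => (L20 a0)
  intro a b
  exact ⟨⟨mul (inv a) b, G1 a b, fun y hy => (G0 a y).symm.trans (congrArg (mul (inv a)) hy)⟩,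
         ⟨mul b (inv a), G3 a b, fun y hy => (G2 a y).symm.trans (congrArg (fun w => mul w (inv a)) hy)⟩⟩
end

section
/- Let Q be a magma with two-sided inverses, i.e., a set with a binary operation ·, an element 1, and a map x ↦ x⁻¹ satisfying 1·x = x·1 = x and x·x⁻¹ = x⁻¹·x = 1 for all x ∈ Q. If Q satisfies the Moufang identity x·(y·(z·y)) = ((x·y)·z)·y for all x, y, z, then Q is a loop: for all a, b ∈ Q there is a unique x with a·x = b and a unique y with y·a = b. -/
/-- A magma with two-sided inverses satisfying the Moufang
identity (M2) is a loop. -/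
theorem stmt_6 {Q : Type*} (mul : Q → Q → Q) (one : Q) (inv : Q → Q)
    (h_one_left : ∀ x, mul one x = x) (h_one_right : ∀ x, mul x one = x)
    (h_inv_right : ∀ x, mul x (inv x) = one)
    (h_inv_left : ∀ x, mul (inv x) x = one)
    (h_m2 : ∀ x y z, mul x (mul y (mul z y)) = mul (mul (mul x y) z) y) :
    ∀ a b : Q, (∃! x : Q, mul a x = b) ∧ (∃! y : Q, mul y a = b) := by
  -- flexibility: y(zy) = (yz)y
  have flex : ∀ y z, mul y (mul z y) = mul (mul y z) y := by
    intro y z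
    have h := h_m2 one y z
    rwa [h_one_left, h_one_left] at h
  -- key identity: (((x y) y') y') y = x  whenever y y' = y' y = 1
  have pairI : ∀ y y' x, mul y y' = one → mul y' y = one →
      mul (mul (mul (mul x y) y') y') y = x := by
    intro y y' x hyy' hy'y
    have hB' : mul y (mul y' (mul one y')) = mul one y' := by
      have h := h_m2 y y' one
      rwa [hyy', h_one_left one] at h
    have h1 := h_m2 x y (mul y' (mul one y'))
    rw [flex y (mul y' (mul one y')), hB', h_one_left, hy'y, h_one_right] at h1
    have h2 := h_m2 (mul x y) y' one
    rw [h_one_right, h_one_left] at h2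
    rw [h2] at h1
    exact h1.symm
  -- right inverse property: (x y) y' = x whenever y y' = y' y = 1
  have pairRIP : ∀ y y' x, mul y y' = one → mul y' y = one →
      mul (mul x y) y' = x := by
    intro y y' x hyy' hy'y
    have hC : mul (mul (mul x y) y') y = mul x y := by
      have h := h_m2 x y y'
      rw [hy'y, h_one_right] at h
      exact h.symm
    have e1 := pairI y y' (mul (mul x y) y') hyy' hy'y
    rw [hC] at e1
    have e2 := pairI y y' x hyy' hy'y
    exact e1.symm.trans e2
  -- left inverse property: y' (y u) = u whenever y y' = y' y = 1
  have pairLIP : ∀ y y' u, mul y y' = one → mul y' y = one →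
      mul y' (mul y u) = u := by
    intro y y' u hyy' hy'y
    have hs : mul (mul u y') y = u := pairRIP y' y u hy'y hyy'
    have h := h_m2 y' y (mul u y')
    rw [hy'y, h_one_left] at h
    rwa [hs] at h
  intro a b
  constructor
  · refine ⟨mul (inv a) b, pairLIP (inv a) a b (h_inv_left a) (h_inv_right a), ?_⟩
    intro x hx
    have h := pairLIP a (inv a) x (h_inv_right a) (h_inv_left a)
    rw [hx] at h
    exact h.symm
  · refine ⟨mul b (inv a), pairRIP (inv a) a b (h_inv_left a) (h_inv_right a), ?_⟩
    intro y hy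
    have h := pairRIP a (inv a) y (h_inv_right a) (h_inv_left a)
    rw [hy] at h
    exact h.symm
end

section
/- Let Q be a magma with two-sided inverses, i.e., a set with a binary operation ·, an element 1, and a map x ↦ x⁻¹ satisfying 1·x = x·1 = x and x·x⁻¹ = x⁻¹·x = 1 for all x ∈ Q. If Q satisfies the C-identity x·(y·(y·z)) = ((x·y)·y)·z for all x, y, z, then Q is a loop: for all a, b ∈ Q there is a unique x with a·x = b and a unique y with y·a = b. -/
/-- A magma with two-sided inverses satisfying the C-identity is
a loop. -/
theorem stmt_8 {Q : Type*} (mul : Q → Q → Q) (one : Q) (inv : Q → Q)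
    (h_one_left : ∀ x, mul one x = x) (h_one_right : ∀ x, mul x one = x)
    (h_inv_right : ∀ x, mul x (inv x) = one)
    (h_inv_left : ∀ x, mul (inv x) x = one)
    (h_c : ∀ x y z, mul x (mul y (mul y z)) = mul (mul (mul x y) y) z) :
    ∀ a b : Q, (∃! x : Q, mul a x = b) ∧ (∃! y : Q, mul y a = b) := by
  -- LC: y(yz) = (yy)z
  have lc : ∀ y z, mul y (mul y z) = mul (mul y y) z := by
    intro y z
    have := h_c one y z
    simpa [h_one_left] using this
  -- RC: (xy)y = x(yy)
  have rc : ∀ x y, mul (mul x y) y = mul x (mul y y) := by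
    intro x y
    have := h_c x y one
    simpa [h_one_right] using this.symm
  -- squares are nuclear
  have nuc : ∀ x y z, mul x (mul (mul y y) z) = mul (mul x (mul y y)) z := by
    intro x y z
    have := h_c x y z
    rw [lc y z, rc x y] at this
    exact this
  -- (aa)(a⁻¹a⁻¹) = 1
  have sq_inv : ∀ a, mul (mul a a) (mul (inv a) (inv a)) = one := by
    intro a
    have h1 : mul (mul a a) (inv a) = a := by
      rw [← lc a (inv a), h_inv_right, h_one_right]
    rw [← rc (mul a a) (inv a), h1, h_inv_right]
  -- (a⁻¹a⁻¹)(aa) = 1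
  have inv_sq : ∀ a, mul (mul (inv a) (inv a)) (mul a a) = one := by
    intro a
    have h1 : mul (mul (inv a) (inv a)) a = inv a := by
      rw [← lc (inv a) a, h_inv_left, h_one_right]
    rw [← rc (mul (inv a) (inv a)) a, h1, h_inv_left]
  intro a b
  constructor
  · -- left translation
    refine ⟨mul a (mul (mul (inv a) (inv a)) b), ?_, ?_⟩
    · show mul a (mul a (mul (mul (inv a) (inv a)) b)) = b
      rw [lc, nuc, sq_inv, h_one_left]
    · intro x hx
      -- injectivity of L_a
      have key : mul a x = mul a (mul a (mul (mul (inv a) (inv a)) b)) := by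
        rw [lc, nuc, sq_inv, h_one_left, hx]
      have key2 : mul a (mul a x) =
          mul a (mul a (mul a (mul (mul (inv a) (inv a)) b))) := by rw [key]
      rw [lc, lc] at key2
      have := congrArg (mul (mul (inv a) (inv a))) key2
      rw [nuc, nuc, inv_sq, h_one_left, h_one_left] at this
      exact this
  · -- right translation
    refine ⟨mul (mul b (mul (inv a) (inv a))) a, ?_, ?_⟩
    · show mul (mul (mul b (mul (inv a) (inv a))) a) a = b
      rw [rc, ← nuc, inv_sq, h_one_right]
    · intro y hy
      have key : mul y a = mul (mul (mul b (mul (inv a) (inv a))) a) a := by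
        rw [rc, ← nuc, inv_sq, h_one_right, hy]
      have key2 : mul (mul y a) a =
          mul (mul (mul (mul b (mul (inv a) (inv a))) a) a) a := by rw [key]
      rw [rc, rc] at key2
      have := congrArg (fun t => mul t (mul (inv a) (inv a))) key2
      rw [← nuc, ← nuc, sq_inv, h_one_right, h_one_right] at this
      exact this
end

section
/- Let Q be a magma with two-sided inverses (1·x = x·1 = x and x·x⁻¹ = x⁻¹·x = 1 for all x) satisfying the C-identity x·(y·(y·z)) = ((x·y)·y)·z for all x, y, z. Then x⁻¹·x⁻¹ = (x·x)⁻¹ for every x ∈ Q. -/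
/-- In a magma with two-sided inverses satisfying the C-identity,
`x⁻¹·x⁻¹ = (x·x)⁻¹` for every `x`. -/
theorem stmt_10 {Q : Type*} (mul : Q → Q → Q) (one : Q) (inv : Q → Q)
    (h_one_left : ∀ x, mul one x = x) (h_one_right : ∀ x, mul x one = x)
    (h_inv_right : ∀ x, mul x (inv x) = one)
    (h_inv_left : ∀ x, mul (inv x) x = one)
    (h_c : ∀ x y z, mul x (mul y (mul y z)) = mul (mul (mul x y) y) z) :
    ∀ x : Q, mul (inv x) (inv x) = inv (mul x x) := by
  intro x
  -- squares associate: b (xx · c) = (b · xx) c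
  have hsq : ∀ y z, mul y (mul y z) = mul (mul y y) z := by
    intro y z
    have := h_c one y z
    simpa [h_one_left] using this
  have hassoc : ∀ b c, mul b (mul (mul x x) c) = mul (mul b (mul x x)) c := by
    intro b c
    rw [← hsq x c]
    rw [h_c b x c]
    congr 1
    have := h_c b x one
    simpa [h_one_right, hsq] using this.symm
  -- (x⁻¹x⁻¹)(xx) = 1
  have h1 : mul (mul (inv x) (inv x)) x = inv x := by
    rw [← hsq]
    simp [h_inv_left, h_one_right]
  have h2 : mul (mul (inv x) (inv x)) (mul x x) = one := by
    have := hassoc (mul (inv x) (inv x)) one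
    -- easier directly: use hsq backwards? compute via h_c
    have hc := h_c (mul (inv x) (inv x)) x one
    rw [h_one_right] at hc
    calc mul (mul (inv x) (inv x)) (mul x x)
        = mul (mul (inv x) (inv x)) (mul x (mul x one)) := by rw [h_one_right]
      _ = mul (mul (mul (mul (inv x) (inv x)) x) x) one := h_c _ _ _
      _ = one := by rw [h1, h_inv_left, h_one_right]
  calc mul (inv x) (inv x)
      = mul (mul (inv x) (inv x)) (mul (mul x x) (inv (mul x x))) := by
        rw [h_inv_right, h_one_right]
    _ = mul (mul (mul (inv x) (inv x)) (mul x x)) (inv (mul x x)) := hassoc _ _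
    _ = inv (mul x x) := by rw [h2, h_one_left]
end

section
/- Let Q be a set with a binary operation ·, an element 1, and a map x ↦ x' such that 1·x = x (1 is a left neutral element) and x'·x = 1 (left inverses) for all x ∈ Q. If Q satisfies the left Bol identity (x·(y·x))·z = x·(y·(x·z)) for all x, y, z, then Q is a loop: 1 is a two-sided neutral element, every x' is a two-sided inverse of x, and for all a, b the equations a·x = b and y·a = b have unique solutions. -/
/-- A groupoid with a left neutral element and left inverses
satisfying the left Bol identity is a loop. -/
theorem stmt_14 {Q : Type*} (mul : Q → Q → Q) (one : Q) (inv : Q → Q)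
    (h_one_left : ∀ x, mul one x = x)
    (h_inv_left : ∀ x, mul (inv x) x = one)
    (h_lb : ∀ x y z, mul (mul x (mul y x)) z = mul x (mul y (mul x z))) :
    (∀ x, mul x one = x) ∧
    (∀ x, mul x (inv x) = one) ∧
    (∀ a b : Q, (∃! x : Q, mul a x = b) ∧ (∃! y : Q, mul y a = b)) := by
  have r0 := h_one_left
  have r1 := h_inv_left
  have r2 := h_lb
  have r3 : ∀ a b, (mul (mul a one) b) = (mul a b) := by
    intro a b
    have h := h_lb one a b
    rw [h_one_left (mul a one)] at h
    rw [h_one_left b] at h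
    rw [h_one_left (mul a b)] at h
    exact h
  have r4 : ∀ a, (mul (inv one) a) = a := by
    intro a
    have h := r3 (inv one) a
    rw [h_inv_left one] at h
    rw [h_one_left a] at h
    exact h.symm
  have r5 : ∀ a b, (mul (mul a (inv one)) b) = (mul a b) := by
    intro a b
    have h := h_lb (inv one) a b
    rw [r4 (mul a (inv one))] at h
    rw [r4 b] at h
    rw [r4 (mul a b)] at h
    exact h
  have r6 : ∀ a, (mul (inv (inv one)) a) = a := by
    intro a
    have h := r5 (inv (inv one)) a
    rw [h_inv_left (inv one)] at h
    rw [h_one_left a] at h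
    exact h.symm
  have r7 : (inv one) = one := by
    have h := r6 (inv one)
    rw [h_inv_left (inv one)] at h
    exact h.symm
  have r8 : ∀ a b, (mul (mul a a) b) = (mul a (mul a b)) := by
    intro a b
    have h := h_lb a one b
    rw [h_one_left a] at h
    rw [h_one_left (mul a b)] at h
    exact h
  have r9 : ∀ a b, (mul (mul a (mul a one)) b) = (mul a (mul a b)) := by
    intro a b
    have h := r8 (mul a one) b
    rw [r3 a (mul a one)] at h
    rw [r3 a b] at h
    rw [r3 a (mul a b)] at h
    exact h
  have r10 : ∀ a b, (mul a (mul (inv a) (mul a b))) = (mul a b) := by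
    intro a b
    have h := h_lb a (inv a) b
    rw [h_inv_left a] at h
    rw [r3 a b] at h
    exact h.symm
  have r11 : ∀ a, (mul (inv a) (mul (inv (inv a)) one)) = one := by
    intro a
    have h := r10 (inv a) a
    rw [h_inv_left a] at h
    exact h
  have r12 : ∀ a b, (mul a (mul (inv (mul a one)) (mul a b))) = (mul a b) := by
    intro a b
    have h := r10 (mul a one) b
    rw [r3 a (mul (inv (mul a one)) (mul (mul a one) b))] at h
    rw [r3 a b] at h
    exact h
  have r13 : ∀ a, (mul (inv a) (mul (inv (mul (inv a) one)) one)) = one := by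
    intro a
    have h := r12 (inv a) a
    rw [h_inv_left a] at h
    exact h
  have r14 : ∀ a b c, (mul (mul a (mul b (mul a one))) c) = (mul a (mul b (mul a c))) := by
    intro a b c
    have h := r3 (mul a (mul b a)) c
    rw [h_lb a b one] at h
    rw [h_lb a b c] at h
    exact h
  have r15 : ∀ a b, (mul (inv (inv a)) (mul (inv a) (mul (inv (inv a)) b))) = (mul (inv (inv a)) b) := by
    intro a b
    have h := h_lb (mul (inv (inv a)) one) (inv a) b
    rw [r11 a] at h
    rw [r3 (inv (inv a)) one] at h
    rw [r3 (inv (inv a)) b] at h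
    rw [r3 (inv (inv a)) (mul (inv a) (mul (inv (inv a)) b))] at h
    exact h.symm
  have r16 : ∀ a, (mul (inv (inv a)) (mul (inv a) one)) = one := by
    intro a
    have h := r15 a (inv a)
    rw [h_inv_left (inv a)] at h
    exact h
  have r17 : ∀ a b c, (mul (mul a (mul b (mul b a))) c) = (mul a (mul b (mul b (mul a c)))) := by
    intro a b c
    have h := h_lb a (mul b b) c
    rw [r8 b a] at h
    rw [r8 b (mul a c)] at h
    exact h
  have r18 : ∀ a b, (mul (inv (inv a)) (mul (inv a) (mul (inv a) (mul (inv (inv a)) b)))) = b := by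
    intro a b
    have h := r17 (mul (inv (inv a)) one) (inv a) b
    rw [r11 a] at h
    rw [r3 (inv (inv a)) (mul (inv a) one)] at h
    rw [r16 a] at h
    rw [h_one_left b] at h
    rw [r3 (inv (inv a)) b] at h
    rw [r3 (inv (inv a)) (mul (inv a) (mul (inv a) (mul (inv (inv a)) b)))] at h
    exact h.symm
  have r19 : ∀ a b, (mul (inv a) (mul (inv (inv a)) b)) = b := by
    intro a b
    have h := r18 a (mul (inv a) (mul (inv (inv a)) b))
    rw [r15 a b] at h
    rw [r18 a b] at h
    exact h.symm
  have r20 : ∀ a, (mul (inv a) one) = (inv a) := by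
    intro a
    have h := r19 a (inv a)
    rw [h_inv_left (inv a)] at h
    exact h
  have r21 : ∀ a, (mul (inv a) (inv (inv a))) = one := by
    intro a
    have h := r11 a
    rw [r20 (inv a)] at h
    exact h
  have r22 : ∀ a, (inv (inv (inv a))) = (inv a) := by
    intro a
    have h := r19 a (inv (inv (inv a)))
    rw [r21 (inv a)] at h
    rw [r20 a] at h
    exact h.symm
  have r23 : ∀ a b, (mul (inv (inv a)) (mul (inv a) b)) = b := by
    intro a b
    have h := r15 a (mul (inv a) (mul (inv a) (mul (inv (inv a)) b)))
    rw [r18 a b] at h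
    exact h
  have r24 : ∀ a, (inv (inv a)) = a := by
    intro a
    have h := r23 a a
    rw [h_inv_left a] at h
    rw [r20 (inv a)] at h
    exact h
  have r25 : ∀ a, (mul a one) = a := by
    intro a
    have h := r20 (inv a)
    rw [r24 a] at h
    exact h
  have r26 : ∀ a, (mul a (inv a)) = one := by
    intro a
    have h := h_inv_left (inv a)
    rw [r24 a] at h
    exact h
  have r27 : ∀ a b, (mul a (mul (inv a) b)) = b := by
    intro a b
    have h := r19 (inv a) b
    rw [r24 a] at h
    exact h
  have r28 : ∀ a b, (mul (inv a) (mul a b)) = b := by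
    intro a b
    have h := r19 a b
    rw [r24 a] at h
    exact h
  refine ⟨r25, r26, fun a b => ⟨⟨mul (inv a) b, r27 a b, ?_⟩,
    ⟨mul (inv a) (mul (mul a b) (inv a)), ?_, ?_⟩⟩⟩
  · intro x hx
    have h := r28 a x
    rw [hx] at h
    exact h.symm
  · -- existence for y·a = b
    show mul (mul (inv a) (mul (mul a b) (inv a))) a = b
    rw [h_lb (inv a) (mul a b) a, h_inv_left a, r25 (mul a b)]
    exact r28 a b
  · intro y hy
    subst hy
    rw [h_lb a y (inv a), r26 a, r25 y, r28 a y]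
end

section
/- Let Q be a set with a binary operation ·, an element 1, and a map x ↦ x' such that 1·x = x (1 is a left neutral element) and x'·x = 1 (left inverses) for all x ∈ Q. If Q satisfies the Moufang identity ((x·y)·x)·z = x·(y·(x·z)) for all x, y, z, then Q is a loop: 1 is a two-sided neutral element, every x' is a two-sided inverse of x, and for all a, b the equations a·x = b and y·a = b have unique solutions. -/
/-- A groupoid with a left neutral element and left inverses
satisfying the Moufang identity (M1) is a loop. -/
theorem stmt_15 {Q : Type*} (mul : Q → Q → Q) (one : Q) (inv : Q → Q)
    (h_one_left : ∀ x, mul one x = x)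
    (h_inv_left : ∀ x, mul (inv x) x = one)
    (h_m1 : ∀ x y z, mul (mul (mul x y) x) z = mul x (mul y (mul x z))) :
    (∀ x, mul x one = x) ∧
    (∀ x, mul x (inv x) = one) ∧
    (∀ a b : Q, (∃! x : Q, mul a x = b) ∧ (∃! y : Q, mul y a = b)) := by
  have R1 : ∀ v1, (mul one v1) = v1 := fun v1 => h_one_left v1
  have R2 : ∀ v1, (mul (inv v1) v1) = one := fun v1 => h_inv_left v1
  have R3 : ∀ v1 v2 v3, (mul (mul (mul v1 v2) v1) v3) = (mul v1 (mul v2 (mul v1 v3))) := fun v1 v2 v3 => h_m1 v1 v2 v3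
  have R4 : ∀ v4 v5, (mul (mul v4 one) v5) = (mul v4 v5) := fun v4 v5 => (Eq.trans (Eq.symm (congrArg (fun t => mul t v5) (congrArg (fun t => mul t one) (R1 v4)))) (Eq.trans (Eq.trans (R3 one v4 v5) (congrArg (mul one) (congrArg (mul v4) (R1 v5)))) (R1 (mul v4 v5))))
  have R5 : ∀ v7, (mul (inv one) v7) = v7 := fun v7 => (Eq.trans (Eq.symm (R4 (inv one) v7)) (Eq.trans (congrArg (fun t => mul t v7) (R2 one)) (R1 v7)))
  have R6 : ∀ v7 v9, (mul (mul v7 v7) v9) = (mul v7 (mul v7 v9)) := fun v7 v9 => (Eq.trans (Eq.symm (congrArg (fun t => mul t v9) (R4 v7 v7))) (Eq.trans (R3 v7 one v9) (congrArg (mul v7) (R1 (mul v7 v9)))))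
  have R7 : ∀ v12 v13, (mul (mul v12 (mul v12 v12)) v13) = (mul v12 (mul v12 (mul v12 v13))) := fun v12 v13 => (Eq.trans (Eq.symm (congrArg (fun t => mul t v13) (R6 v12 v12))) (R3 v12 v12 v13))
  have R8 : ∀ v7 v15, (mul (mul v7 (mul v7 one)) v15) = (mul v7 (mul v7 v15)) := fun v7 v15 => (Eq.trans (Eq.symm (congrArg (fun t => mul t v15) (R6 v7 one))) (Eq.trans (R4 (mul v7 v7) v15) (R6 v7 v15)))
  have R9 : ∀ v4 v5, (mul (inv v4) (mul v4 (mul (inv v4) v5))) = (mul (inv v4) v5) := fun v4 v5 => (Eq.trans (Eq.symm (R3 (inv v4) v4 v5)) (Eq.trans (congrArg (fun t => mul t v5) (congrArg (fun t => mul t (inv v4)) (R2 v4))) (congrArg (fun t => mul t v5) (R1 (inv v4)))))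
  have R10 : ∀ v1 v2 v9, (mul (mul v1 (mul v2 (mul v1 one))) v9) = (mul v1 (mul v2 (mul v1 v9))) := fun v1 v2 v9 => (Eq.trans (Eq.symm (congrArg (fun t => mul t v9) (R3 v1 v2 one))) (Eq.trans (R4 (mul (mul v1 v2) v1) v9) (R3 v1 v2 v9)))
  have R11 : ∀ v10 v11, (mul (mul v10 (inv one)) v11) = (mul v10 v11) := fun v10 v11 => (Eq.trans (Eq.symm (congrArg (fun t => mul t v11) (congrArg (fun t => mul t (inv one)) (R5 v10)))) (Eq.trans (Eq.trans (R3 (inv one) v10 v11) (congrArg (mul (inv one)) (congrArg (mul v10) (R5 v11)))) (R5 (mul v10 v11))))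
  have R12 : ∀ v13, (mul (inv (inv one)) v13) = v13 := fun v13 => (Eq.trans (Eq.symm (R11 (inv (inv one)) v13)) (Eq.trans (congrArg (fun t => mul t v13) (R2 (inv one))) (R1 v13)))
  have R13 : (inv one) = one := (Eq.trans (Eq.symm (R12 (inv one))) (R2 (inv one)))
  have R14 : ∀ v7 v19, (mul (mul v7 (mul v7 (mul v7 v7))) v19) = (mul v7 (mul v7 (mul v7 (mul v7 v19)))) := fun v7 v19 => (Eq.trans (Eq.symm (congrArg (fun t => mul t v19) (R6 v7 (mul v7 v7)))) (Eq.trans (Eq.trans (R6 (mul v7 v7) v19) (congrArg (mul (mul v7 v7)) (R6 v7 v19))) (R6 v7 (mul v7 (mul v7 v19)))))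
  have R15 : ∀ v7, (mul (inv v7) (mul v7 one)) = one := fun v7 => (Eq.trans (Eq.symm (congrArg (mul (inv v7)) (congrArg (mul v7) (R2 v7)))) (Eq.trans (R9 v7 v7) (R2 v7)))
  have R16 : ∀ v7, (mul (inv (mul v7 v7)) (mul v7 (mul v7 one))) = one := fun v7 => (Eq.trans (Eq.symm (congrArg (mul (inv (mul v7 v7))) (R6 v7 one))) (R15 (mul v7 v7)))
  have R17 : ∀ v9 v17, (mul v9 (mul (inv v9) (mul v9 v17))) = (mul v9 v17) := fun v9 v17 => (Eq.trans (Eq.symm (R10 v9 (inv v9) v17)) (Eq.trans (congrArg (fun t => mul t v17) (congrArg (mul v9) (R15 v9))) (R4 v9 v17)))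
  have R18 : ∀ v2 v6 v7, (mul (mul v6 (mul v2 (mul v6 (mul v6 v2)))) v7) = (mul (mul v6 v2) (mul v6 (mul (mul v6 v2) v7))) := fun v2 v6 v7 => (Eq.trans (Eq.symm (congrArg (fun t => mul t v7) (R3 v6 v2 (mul v6 v2)))) (R3 (mul v6 v2) v6 v7))
  have R19 : ∀ v4 v8 v9, (mul (mul (mul v4 v8) (mul v4 one)) v9) = (mul v4 (mul v8 (mul v4 v9))) := fun v4 v8 v9 => (Eq.trans (Eq.symm (congrArg (fun t => mul t v9) (congrArg (fun t => mul t (mul v4 one)) (R4 v4 v8)))) (Eq.trans (Eq.trans (R3 (mul v4 one) v8 v9) (congrArg (mul (mul v4 one)) (congrArg (mul v8) (R4 v4 v9)))) (R4 v4 (mul v8 (mul v4 v9)))))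
  have R20 : ∀ v7 v12 v13, (mul (mul (mul v7 (mul v7 v12)) (mul v7 v7)) v13) = (mul v7 (mul v7 (mul v12 (mul v7 (mul v7 v13))))) := fun v7 v12 v13 => (Eq.trans (Eq.symm (congrArg (fun t => mul t v13) (congrArg (fun t => mul t (mul v7 v7)) (R6 v7 v12)))) (Eq.trans (Eq.trans (R3 (mul v7 v7) v12 v13) (congrArg (mul (mul v7 v7)) (congrArg (mul v12) (R6 v7 v13)))) (R6 v7 (mul v12 (mul v7 (mul v7 v13))))))
  have R21 : ∀ v7 v25, (mul (mul v7 (mul v7 (mul v7 (mul v7 one)))) v25) = (mul v7 (mul v7 (mul v7 (mul v7 v25)))) := fun v7 v25 => (Eq.trans (Eq.symm (Eq.trans (congrArg (fun t => mul t v25) (R6 v7 (mul (mul v7 v7) one))) (congrArg (fun t => mul t v25) (congrArg (mul v7) (congrArg (mul v7) (R6 v7 one)))))) (Eq.trans (Eq.trans (R8 (mul v7 v7) v25) (congrArg (mul (mul v7 v7)) (R6 v7 v25))) (R6 v7 (mul v7 (mul v7 v25)))))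
  have R22 : ∀ v7 v11 v19, (mul (mul v11 (mul v7 (mul v7 (mul v11 one)))) v19) = (mul v11 (mul v7 (mul v7 (mul v11 v19)))) := fun v7 v11 v19 => (Eq.trans (Eq.symm (congrArg (fun t => mul t v19) (congrArg (mul v11) (R6 v7 (mul v11 one))))) (Eq.trans (R10 v11 (mul v7 v7) v19) (congrArg (mul v11) (R6 v7 (mul v11 v19)))))
  have R23 : ∀ v19, (mul (inv v19) (mul (inv (inv v19)) one)) = one := fun v19 => (Eq.trans (Eq.symm (congrArg (mul (inv v19)) (congrArg (mul (inv (inv v19))) (R2 v19)))) (Eq.trans (R17 (inv v19) v19) (R2 v19)))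
  have R24 : ∀ v3 v11, (mul v3 (mul (inv (mul v3 one)) (mul v3 v11))) = (mul v3 v11) := fun v3 v11 => (Eq.trans (Eq.symm (R10 v3 (inv (mul v3 one)) v11)) (Eq.trans (congrArg (fun t => mul t v11) (congrArg (mul v3) (R2 (mul v3 one)))) (R4 v3 v11)))
  have R25 : ∀ v17 v19 v21, (mul v19 (mul (mul (inv v19) (mul v19 v17)) (mul v19 v21))) = (mul v19 (mul v17 (mul v19 v21))) := fun v17 v19 v21 => (Eq.trans (Eq.symm (R3 v19 (mul (inv v19) (mul v19 v17)) v21)) (Eq.trans (congrArg (fun t => mul t v21) (congrArg (fun t => mul t v19) (R17 v19 v17))) (R3 v19 v17 v21)))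
  have R26 : ∀ v1 v2 v13, (mul (mul v1 (mul v2 (mul v1 (mul (mul v1 v2) v1)))) v13) = (mul v1 (mul v2 (mul v1 (mul v1 (mul v2 (mul v1 v13)))))) := fun v1 v2 v13 => (Eq.trans (Eq.symm (congrArg (fun t => mul t v13) (R3 v1 v2 (mul (mul v1 v2) v1)))) (Eq.trans (Eq.trans (R6 (mul (mul v1 v2) v1) v13) (congrArg (mul (mul (mul v1 v2) v1)) (R3 v1 v2 v13))) (R3 v1 v2 (mul v1 (mul v2 (mul v1 v13))))))
  have R27 : ∀ v12 v23, (mul (mul v12 (mul v12 (mul v12 (mul v12 (mul v12 v12))))) v23) = (mul v12 (mul v12 (mul v12 (mul v12 (mul v12 (mul v12 v23)))))) := fun v12 v23 => (Eq.trans (Eq.symm (congrArg (fun t => mul t v23) (R7 v12 (mul v12 (mul v12 v12))))) (Eq.trans (Eq.trans (R6 (mul v12 (mul v12 v12)) v23) (congrArg (mul (mul v12 (mul v12 v12))) (R7 v12 v23))) (R7 v12 (mul v12 (mul v12 (mul v12 v23))))))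
  have R28 : ∀ v1 v2 v5 v13, (mul (mul v5 (mul v1 (mul v2 (mul v1 (mul v5 one))))) v13) = (mul v5 (mul v1 (mul v2 (mul v1 (mul v5 v13))))) := fun v1 v2 v5 v13 => (Eq.trans (Eq.symm (congrArg (fun t => mul t v13) (congrArg (mul v5) (R3 v1 v2 (mul v5 one))))) (Eq.trans (R10 v5 (mul (mul v1 v2) v1) v13) (congrArg (mul v5) (R3 v1 v2 (mul v5 v13)))))
  have R29 : ∀ v2 v9 v11, (mul (mul (mul v9 v2) (mul v9 (mul (mul v9 v2) v9))) v11) = (mul v9 (mul (mul v2 (mul v9 (mul v9 v2))) (mul v9 v11))) := fun v2 v9 v11 => (Eq.trans (Eq.symm (congrArg (fun t => mul t v11) (R18 v2 v9 v9))) (R3 v9 (mul v2 (mul v9 (mul v9 v2))) v11))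
  have R30 : ∀ v24 v25, (mul (mul v24 (mul v24 (inv v24))) v25) = (mul (mul v24 (inv v24)) (mul v24 (mul (mul v24 (inv v24)) v25))) := fun v24 v25 => (Eq.trans (Eq.symm (congrArg (fun t => mul t v25) (R17 v24 (mul v24 (inv v24))))) (R18 (inv v24) v24 v25))
  have R31 : ∀ v30 v35, (mul (mul (mul v30 (inv v30)) (mul v30 (mul (mul v30 (inv v30)) (mul v30 one)))) v35) = (mul v30 (mul (mul v30 (inv v30)) (mul v30 v35))) := fun v30 v35 => (Eq.trans (Eq.symm (congrArg (fun t => mul t v35) (R30 v30 (mul v30 one)))) (R19 v30 (mul v30 (inv v30)) v35))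
  have R32 : ∀ v33 v39, (mul (mul (mul v33 (inv v33)) (mul v33 (mul (mul v33 (inv v33)) (mul v33 v33)))) v39) = (mul v33 (mul v33 (mul v33 v39))) := fun v33 v39 => (Eq.trans (Eq.symm (congrArg (fun t => mul t v39) (R30 v33 (mul v33 v33)))) (Eq.trans (R20 v33 (inv v33) v39) (congrArg (mul v33) (R17 v33 (mul v33 v39)))))
  have R33 : ∀ v2 v12 v13, (mul (mul v12 (mul v2 (mul v12 (mul (mul v12 v2) one)))) v13) = (mul (mul v12 v2) (mul v12 (mul (mul v12 v2) v13))) := fun v2 v12 v13 => (Eq.trans (Eq.symm (congrArg (fun t => mul t v13) (R3 v12 v2 (mul (mul v12 v2) one)))) (R19 (mul v12 v2) v12 v13))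
  have R34 : ∀ v7 v18 v19, (mul (mul (mul v7 (mul v7 v18)) (mul v7 (mul v7 one))) v19) = (mul v7 (mul v7 (mul v18 (mul v7 (mul v7 v19))))) := fun v7 v18 v19 => (Eq.trans (Eq.symm (Eq.trans (congrArg (fun t => mul t v19) (congrArg (fun t => mul t (mul (mul v7 v7) one)) (R6 v7 v18))) (congrArg (fun t => mul t v19) (congrArg (mul (mul v7 (mul v7 v18))) (R6 v7 one))))) (Eq.trans (Eq.trans (R19 (mul v7 v7) v18 v19) (congrArg (mul (mul v7 v7)) (congrArg (mul v18) (R6 v7 v19)))) (R6 v7 (mul v18 (mul v7 (mul v7 v19))))))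
  have R35 : ∀ v2 v14 v19, (mul (mul v14 (mul v2 (mul v14 (mul v14 one)))) v19) = (mul v14 (mul (mul v2 (mul v14 one)) (mul v14 v19))) := fun v2 v14 v19 => (Eq.trans (Eq.symm (congrArg (fun t => mul t v19) (R10 v14 v2 (mul v14 one)))) (R19 v14 (mul v2 (mul v14 one)) v19))
  have R36 : ∀ v19 v27, (mul (mul v19 (mul (inv v19) one)) v27) = (mul v19 (mul (inv v19) (mul (inv v19) (mul v19 v27)))) := fun v19 v27 => (Eq.trans (Eq.symm (congrArg (fun t => mul t v27) (congrArg (mul v19) (congrArg (mul (inv v19)) (R15 v19))))) (R22 (inv v19) v19 v27))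
  have R37 : ∀ v29 v31, (mul (mul v29 (mul (inv v29) (mul (inv v29) (mul v29 v29)))) v31) = (mul v29 v31) := fun v29 v31 => (Eq.trans (Eq.symm (congrArg (fun t => mul t v31) (R36 v29 v29))) (Eq.trans (Eq.trans (R3 v29 (mul (inv v29) one) v31) (congrArg (mul v29) (R4 (inv v29) (mul v29 v31)))) (R17 v29 v31)))
  have R38 : ∀ v19 v47, (mul (inv v19) (mul (inv (inv v19)) (mul (inv (inv v19)) (mul (inv v19) v47)))) = v47 := fun v19 v47 => (Eq.trans (Eq.symm (R36 (inv v19) v47)) (Eq.trans (congrArg (fun t => mul t v47) (R23 v19)) (R1 v47)))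
  have R39 : ∀ v4 v33, (mul (mul v4 (mul (inv (mul v4 one)) one)) v33) = (mul v4 (mul (inv (mul v4 one)) (mul (inv (mul v4 one)) (mul v4 v33)))) := fun v4 v33 => (Eq.trans (Eq.symm (congrArg (fun t => mul t v33) (R4 v4 (mul (inv (mul v4 one)) one)))) (Eq.trans (Eq.trans (R36 (mul v4 one) v33) (congrArg (mul (mul v4 one)) (congrArg (mul (inv (mul v4 one))) (congrArg (mul (inv (mul v4 one))) (R4 v4 v33))))) (R4 v4 (mul (inv (mul v4 one)) (mul (inv (mul v4 one)) (mul v4 v33))))))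
  have R40 : ∀ v7 v37, (mul (mul v7 (mul v7 (mul (inv (mul v7 v7)) one))) v37) = (mul v7 (mul v7 (mul (inv (mul v7 v7)) (mul (inv (mul v7 v7)) (mul v7 (mul v7 v37)))))) := fun v7 v37 => (Eq.trans (Eq.symm (congrArg (fun t => mul t v37) (R6 v7 (mul (inv (mul v7 v7)) one)))) (Eq.trans (Eq.trans (R36 (mul v7 v7) v37) (congrArg (mul (mul v7 v7)) (congrArg (mul (inv (mul v7 v7))) (congrArg (mul (inv (mul v7 v7))) (R6 v7 v37))))) (R6 v7 (mul (inv (mul v7 v7)) (mul (inv (mul v7 v7)) (mul v7 (mul v7 v37)))))))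
  have R41 : ∀ v32 v37, (mul (mul v32 (mul (inv v32) (mul (inv v32) (mul v32 (mul v32 one))))) v37) = (mul v32 v37) := fun v32 v37 => (Eq.trans (Eq.symm (congrArg (fun t => mul t v37) (R36 v32 (mul v32 one)))) (Eq.trans (Eq.trans (R19 v32 (mul (inv v32) one) v37) (congrArg (mul v32) (R4 (inv v32) (mul v32 v37)))) (R17 v32 v37)))
  have R42 : ∀ v35 v37, (mul (mul v35 (mul (inv (mul v35 one)) (mul (inv (mul v35 one)) (mul v35 v35)))) v37) = (mul v35 v37) := fun v35 v37 => (Eq.trans (Eq.symm (congrArg (fun t => mul t v37) (R39 v35 v35))) (Eq.trans (Eq.trans (R3 v35 (mul (inv (mul v35 one)) one) v37) (congrArg (mul v35) (R4 (inv (mul v35 one)) (mul v35 v37)))) (R24 v35 v37)))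
  have R43 : ∀ v13, (mul (inv v13) (mul (inv (mul (inv v13) one)) one)) = one := fun v13 => (Eq.trans (Eq.symm (congrArg (mul (inv v13)) (congrArg (mul (inv (mul (inv v13) one))) (R2 v13)))) (Eq.trans (R24 (inv v13) v13) (R2 v13)))
  have R44 : ∀ v13 v47, (mul (inv v13) (mul (inv (mul (inv v13) one)) (mul (inv (mul (inv v13) one)) (mul (inv v13) v47)))) = v47 := fun v13 v47 => (Eq.trans (Eq.symm (R39 (inv v13) v47)) (Eq.trans (congrArg (fun t => mul t v47) (R43 v13)) (R1 v47)))
  have R45 : ∀ v2 v21 v23, (mul (mul v21 (mul (mul v2 (mul v21 one)) (mul v21 v21))) v23) = (mul v21 (mul (mul v2 (mul v21 (mul v21 one))) (mul v21 v23))) := fun v2 v21 v23 => (Eq.trans (Eq.symm (congrArg (fun t => mul t v23) (R35 v2 v21 v21))) (R3 v21 (mul v2 (mul v21 (mul v21 one))) v23))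
  have R46 : ∀ v7 v24 v29, (mul (mul v24 (mul v7 (mul v7 (mul v24 (mul v24 one))))) v29) = (mul v24 (mul (mul v7 (mul v7 (mul v24 one))) (mul v24 v29))) := fun v7 v24 v29 => (Eq.trans (Eq.symm (congrArg (fun t => mul t v29) (congrArg (mul v24) (R6 v7 (mul v24 (mul v24 one)))))) (Eq.trans (R35 (mul v7 v7) v24 v29) (congrArg (mul v24) (congrArg (fun t => mul t (mul v24 v29)) (R6 v7 (mul v24 one))))))
  have R47 : ∀ v4 v5 v9, (mul (inv v4) (mul (mul v4 (mul (inv v4) v5)) (mul (inv v4) v9))) = (mul (inv v4) (mul v5 (mul (inv v4) v9))) := fun v4 v5 v9 => (Eq.trans (Eq.symm (R3 (inv v4) (mul v4 (mul (inv v4) v5)) v9)) (Eq.trans (congrArg (fun t => mul t v9) (congrArg (fun t => mul t (inv v4)) (R9 v4 v5))) (R3 (inv v4) v5 v9)))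
  have R48 : ∀ v1 v2, (mul (inv (mul (mul v1 v2) v1)) (mul v1 (mul v2 (mul v1 one)))) = one := fun v1 v2 => (Eq.trans (Eq.symm (congrArg (mul (inv (mul (mul v1 v2) v1))) (R3 v1 v2 one))) (R15 (mul (mul v1 v2) v1)))
  have R49 : ∀ v12, (mul (inv (mul v12 (mul v12 v12))) (mul v12 (mul v12 (mul v12 one)))) = one := fun v12 => (Eq.trans (Eq.symm (congrArg (mul (inv (mul v12 (mul v12 v12)))) (R7 v12 one))) (R15 (mul v12 (mul v12 v12))))
  have R50 : ∀ v17 v25, (mul v25 (mul v25 (mul (inv (mul v25 v25)) (mul v25 (mul v25 v17))))) = (mul v25 (mul v25 v17)) := fun v17 v25 => (Eq.trans (Eq.symm (Eq.trans (R6 v25 (mul (inv (mul v25 v25)) (mul (mul v25 v25) v17))) (congrArg (mul v25) (congrArg (mul v25) (congrArg (mul (inv (mul v25 v25))) (R6 v25 v17)))))) (Eq.trans (R17 (mul v25 v25) v17) (R6 v25 v17)))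
  have R51 : ∀ v11 v13 v15, (mul v13 (mul (mul (inv (mul v13 one)) (mul v13 v11)) (mul v13 v15))) = (mul v13 (mul v11 (mul v13 v15))) := fun v11 v13 v15 => (Eq.trans (Eq.symm (R3 v13 (mul (inv (mul v13 one)) (mul v13 v11)) v15)) (Eq.trans (congrArg (fun t => mul t v15) (congrArg (fun t => mul t v13) (R24 v13 v11))) (R3 v13 v11 v15)))
  have R52 : ∀ v4 v31, (mul (mul v4 (mul v4 (inv (mul v4 one)))) v31) = (mul (mul v4 (inv (mul v4 one))) (mul v4 (mul (mul v4 (inv (mul v4 one))) v31))) := fun v4 v31 => (Eq.trans (Eq.symm (Eq.trans (congrArg (fun t => mul t v31) (R4 v4 (mul (mul v4 one) (inv (mul v4 one))))) (congrArg (fun t => mul t v31) (congrArg (mul v4) (R4 v4 (inv (mul v4 one))))))) (Eq.trans (Eq.trans (Eq.trans (R30 (mul v4 one) v31) (congrArg (fun t => mul t (mul (mul v4 one) (mul (mul (mul v4 one) (inv (mul v4 one))) v31))) (R4 v4 (inv (mul v4 one))))) (congrArg (mul (mul v4 (inv (mul v4 one)))) (congrArg (mul (mul v4 one)) (congrArg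 (fun t => mul t v31) (R4 v4 (inv (mul v4 one))))))) (congrArg (mul (mul v4 (inv (mul v4 one)))) (R4 v4 (mul (mul v4 (inv (mul v4 one))) v31)))))
  have R53 : ∀ v7 v35, (mul (mul v7 (mul v7 (mul v7 (mul v7 (inv (mul v7 v7)))))) v35) = (mul (mul v7 (mul v7 (inv (mul v7 v7)))) (mul v7 (mul v7 (mul (mul v7 (mul v7 (inv (mul v7 v7)))) v35)))) := fun v7 v35 => (Eq.trans (Eq.symm (Eq.trans (congrArg (fun t => mul t v35) (R6 v7 (mul (mul v7 v7) (inv (mul v7 v7))))) (congrArg (fun t => mul t v35) (congrArg (mul v7) (congrArg (mul v7) (R6 v7 (inv (mul v7 v7)))))))) (Eq.trans (Eq.trans (Eq.trans (R30 (mul v7 v7) v35) (congrArg (fun t => mul t (mul (mul v7 v7) (mul (mul (mul v7 v7) (inv (mul v7 v7))) v35))) (R6 v7 (inv (mul v7 v7))))) (congrArg (mul (mul v7 (mul v7 (inv (mul v7 v7))))) (congrArg (mul (mul v7 v7)) (congrArg (fun t => mul t v35) (R6 v7 (inv (mul v7 v7))))))) (congrArg (mul (mul v7 (mul v7 (inv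 (mul v7 v7))))) (R6 v7 (mul (mul v7 (mul v7 (inv (mul v7 v7)))) v35)))))
  have R54 : ∀ v33 v45, (mul (mul (mul v33 (inv v33)) (mul v33 (mul (mul v33 (inv v33)) (mul v33 (mul v33 one))))) v45) = (mul v33 (mul v33 (mul v33 v45))) := fun v33 v45 => (Eq.trans (Eq.symm (congrArg (fun t => mul t v45) (R30 v33 (mul v33 (mul v33 one))))) (Eq.trans (R34 v33 (inv v33) v45) (congrArg (mul v33) (R17 v33 (mul v33 v45)))))
  have R55 : ∀ v22 v27, (mul v22 (mul (mul (inv (mul v22 v22)) (mul v22 one)) (mul v22 v27))) = (mul v22 v27) := fun v22 v27 => (Eq.trans (Eq.symm (R35 (inv (mul v22 v22)) v22 v27)) (Eq.trans (congrArg (fun t => mul t v27) (congrArg (mul v22) (R16 v22))) (R4 v22 v27)))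
  have R56 : ∀ v19 v29 v37, (mul (mul v29 (mul v19 (mul (inv v19) (mul (inv v19) (mul v19 (mul v29 one)))))) v37) = (mul v29 (mul v19 (mul (inv v19) (mul (inv v19) (mul v19 (mul v29 v37)))))) := fun v19 v29 v37 => (Eq.trans (Eq.symm (congrArg (fun t => mul t v37) (congrArg (mul v29) (R36 v19 (mul v29 one))))) (Eq.trans (R10 v29 (mul v19 (mul (inv v19) one)) v37) (congrArg (mul v29) (R36 v19 (mul v29 v37)))))
  have R57 : ∀ v7 v43, (mul (mul v7 (mul v7 (mul (inv (mul v7 (mul v7 one))) one))) v43) = (mul v7 (mul v7 (mul (inv (mul v7 (mul v7 one))) (mul (inv (mul v7 (mul v7 one))) (mul v7 (mul v7 v43)))))) := fun v7 v43 => (Eq.trans (Eq.symm (Eq.trans (congrArg (fun t => mul t v43) (R6 v7 (mul (inv (mul (mul v7 v7) one)) one))) (congrArg (fun t => mul t v43) (congrArg (mul v7) (congrArg (mul v7) (congrArg (fun t => mul t one) (congrArg inv (R6 v7 one)))))))) (Eq.trans (Eq.trans (Eq.trans (Eq.trans (R39 (mul v7 v7) v43) (congrArg (mul (mul v7 v7))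 (congrArg (fun t => mul t (mul (inv (mul (mul v7 v7) one)) (mul (mul v7 v7) v43))) (congrArg inv (R6 v7 one))))) (congrArg (mul (mul v7 v7)) (congrArg (mul (inv (mul v7 (mul v7 one)))) (congrArg (fun t => mul t (mul (mul v7 v7) v43)) (congrArg inv (R6 v7 one)))))) (congrArg (mul (mul v7 v7)) (congrArg (mul (inv (mul v7 (mul v7 one)))) (congrArg (mul (inv (mul v7 (mul v7 one)))) (R6 v7 v43))))) (R6 v7 (mul (inv (mul v7 (mul v7 one))) (mul (inv (mul v7 (mul v7 one))) (mul v7 (mul v7 v43)))))))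
  have R58 : ∀ v39 v41, (mul (mul v39 (mul v39 (mul (inv (mul v39 v39)) (mul (inv (mul v39 v39)) (mul v39 (mul v39 v39)))))) v41) = (mul v39 (mul (mul v39 (mul (inv (mul v39 v39)) one)) (mul v39 v41))) := fun v39 v41 => (Eq.trans (Eq.symm (congrArg (fun t => mul t v41) (R40 v39 v39))) (R3 v39 (mul v39 (mul (inv (mul v39 v39)) one)) v41))
  have R59 : ∀ v7 v11, (mul (inv v11) (mul (mul v11 (mul (inv v11) v7)) one)) = (mul (inv v11) (mul v7 one)) := fun v7 v11 => (Eq.trans (Eq.symm (congrArg (mul (inv v11)) (congrArg (mul (mul v11 (mul (inv v11) v7))) (R2 v11)))) (Eq.trans (R47 v11 v7 v11) (congrArg (mul (inv v11)) (congrArg (mul v7) (R2 v11)))))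
  have R60 : ∀ v36 v41, (mul (mul (mul v36 (inv (mul v36 one))) (mul v36 (mul (mul v36 (inv (mul v36 one))) (mul v36 one)))) v41) = (mul v36 (mul (mul v36 (inv (mul v36 one))) (mul v36 v41))) := fun v36 v41 => (Eq.trans (Eq.symm (congrArg (fun t => mul t v41) (R52 v36 (mul v36 one)))) (R19 v36 (mul v36 (inv (mul v36 one))) v41))
  have R61 : ∀ v39 v45, (mul (mul (mul v39 (inv (mul v39 one))) (mul v39 (mul (mul v39 (inv (mul v39 one))) (mul v39 v39)))) v45) = (mul v39 (mul v39 (mul v39 v45))) := fun v39 v45 => (Eq.trans (Eq.symm (congrArg (fun t => mul t v45) (R52 v39 (mul v39 v39)))) (Eq.trans (R20 v39 (inv (mul v39 one)) v45) (congrArg (mul v39) (R24 v39 (mul v39 v45)))))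
  have R62 : ∀ v1 v2 v6 v7, (mul (mul (mul v1 (mul v2 (mul v1 v6))) (mul (mul v1 v2) v1)) v7) = (mul v1 (mul v2 (mul v1 (mul v6 (mul v1 (mul v2 (mul v1 v7))))))) := fun v1 v2 v6 v7 => (Eq.trans (Eq.symm (congrArg (fun t => mul t v7) (congrArg (fun t => mul t (mul (mul v1 v2) v1)) (R3 v1 v2 v6)))) (Eq.trans (Eq.trans (R3 (mul (mul v1 v2) v1) v6 v7) (congrArg (mul (mul (mul v1 v2) v1)) (congrArg (mul v6) (R3 v1 v2 v7)))) (R3 v1 v2 (mul v6 (mul v1 (mul v2 (mul v1 v7)))))))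
  have R63 : ∀ v12 v16 v17, (mul (mul (mul v12 (mul v12 (mul v12 v16))) (mul v12 (mul v12 v12))) v17) = (mul v12 (mul v12 (mul v12 (mul v16 (mul v12 (mul v12 (mul v12 v17))))))) := fun v12 v16 v17 => (Eq.trans (Eq.symm (congrArg (fun t => mul t v17) (congrArg (fun t => mul t (mul v12 (mul v12 v12))) (R7 v12 v16)))) (Eq.trans (Eq.trans (R3 (mul v12 (mul v12 v12)) v16 v17) (congrArg (mul (mul v12 (mul v12 v12))) (congrArg (mul v16) (R7 v12 v17)))) (R7 v12 (mul v16 (mul v12 (mul v12 (mul v12 v17)))))))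
  have R64 : ∀ v1 v2 v19, (mul (mul v1 (mul v2 (mul v1 (mul v1 (mul v2 (mul v1 one)))))) v19) = (mul v1 (mul v2 (mul v1 (mul v1 (mul v2 (mul v1 v19)))))) := fun v1 v2 v19 => (Eq.trans (Eq.symm (Eq.trans (congrArg (fun t => mul t v19) (R3 v1 v2 (mul (mul (mul v1 v2) v1) one))) (congrArg (fun t => mul t v19) (congrArg (mul v1) (congrArg (mul v2) (congrArg (mul v1) (R3 v1 v2 one))))))) (Eq.trans (Eq.trans (R8 (mul (mul v1 v2) v1) v19) (congrArg (mul (mul (mul v1 v2) v1)) (R3 v1 v2 v19))) (R3 v1 v2 (mul v1 (mul v2 (mul v1 v19))))))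
  have R65 : ∀ v4 v11, (mul (inv (mul v4 one)) (mul v4 (mul (inv (mul v4 one)) v11))) = (mul (inv (mul v4 one)) v11) := fun v4 v11 => (Eq.trans (Eq.symm (congrArg (mul (inv (mul v4 one))) (R4 v4 (mul (inv (mul v4 one)) v11)))) (R9 (mul v4 one) v11))
  have R66 : ∀ v7 v15, (mul (inv (mul v7 v7)) (mul v7 (mul v7 (mul (inv (mul v7 v7)) v15)))) = (mul (inv (mul v7 v7)) v15) := fun v7 v15 => (Eq.trans (Eq.symm (congrArg (mul (inv (mul v7 v7))) (R6 v7 (mul (inv (mul v7 v7)) v15)))) (R9 (mul v7 v7) v15))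
  have R67 : ∀ v7 v21 v29, (mul (mul v21 (mul v7 (mul v7 (mul v7 (mul v7 (mul v21 one)))))) v29) = (mul v21 (mul v7 (mul v7 (mul v7 (mul v7 (mul v21 v29)))))) := fun v7 v21 v29 => (Eq.trans (Eq.symm (congrArg (fun t => mul t v29) (congrArg (mul v21) (R14 v7 (mul v21 one))))) (Eq.trans (R10 v21 (mul v7 (mul v7 (mul v7 v7))) v29) (congrArg (mul v21) (R14 v7 (mul v21 v29)))))
  have R68 : ∀ v4 v12 v13, (mul (mul v12 (mul v4 (mul v12 (mul v12 (mul v4 one))))) v13) = (mul (mul v12 (mul v4 one)) (mul v12 (mul (mul v12 (mul v4 one)) v13))) := fun v4 v12 v13 => (Eq.trans (Eq.symm (congrArg (fun t => mul t v13) (congrArg (mul v12) (R4 v4 (mul v12 (mul v12 (mul v4 one))))))) (R18 (mul v4 one) v12 v13))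
  have R69 : ∀ v7 v16 v17, (mul (mul v16 (mul v7 (mul v7 (mul v16 (mul v16 (mul v7 v7)))))) v17) = (mul (mul v16 (mul v7 v7)) (mul v16 (mul (mul v16 (mul v7 v7)) v17))) := fun v7 v16 v17 => (Eq.trans (Eq.symm (congrArg (fun t => mul t v17) (congrArg (mul v16) (R6 v7 (mul v16 (mul v16 (mul v7 v7))))))) (R18 (mul v7 v7) v16 v17))
  have R70 : ∀ v2 v12 v17, (mul (mul (mul v12 v2) (mul v12 (mul (mul v12 v2) (mul v12 one)))) v17) = (mul v12 (mul (mul v2 (mul v12 (mul v12 v2))) (mul v12 v17))) := fun v2 v12 v17 => (Eq.trans (Eq.symm (congrArg (fun t => mul t v17) (R18 v2 v12 (mul v12 one)))) (R19 v12 (mul v2 (mul v12 (mul v12 v2))) v17))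
  have R71 : ∀ v7 v17 v29, (mul (mul v7 (mul v7 (mul v17 (mul v17 (mul v7 (mul v7 one)))))) v29) = (mul v7 (mul v7 (mul v17 (mul v17 (mul v7 (mul v7 v29)))))) := fun v7 v17 v29 => (Eq.trans (Eq.symm (Eq.trans (congrArg (fun t => mul t v29) (R6 v7 (mul v17 (mul v17 (mul (mul v7 v7) one))))) (congrArg (fun t => mul t v29) (congrArg (mul v7) (congrArg (mul v7) (congrArg (mul v17) (congrArg (mul v17) (R6 v7 one)))))))) (Eq.trans (Eq.trans (R22 v17 (mul v7 v7) v29) (congrArg (mul (mul v7 v7)) (congrArg (mul v17) (congrArg (mul v17) (R6 v7 v29))))) (R6 v7 (mul v17 (mul v17 (mul v7 (mul v7 v29)))))))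
  have R72 : ∀ v2 v15 v17, (mul v15 (mul (mul v2 (mul v15 (mul (mul v15 v2) v15))) (mul v15 v17))) = (mul (mul v15 (mul v2 (mul v15 (mul v15 (mul v2 (mul v15 v15)))))) v17) := fun v2 v15 v17 => (Eq.trans (Eq.symm (R3 v15 (mul v2 (mul v15 (mul (mul v15 v2) v15))) v17)) (congrArg (fun t => mul t v17) (R26 v15 v2 v15)))
  have R73 : ∀ v19 v31, (mul (mul v19 (mul (mul v19 (inv v19)) v19)) v31) = (mul v19 (mul v19 v31)) := fun v19 v31 => (Eq.trans (Eq.symm (congrArg (fun t => mul t v31) (R17 v19 (mul (mul v19 (inv v19)) v19)))) (Eq.trans (Eq.trans (R26 v19 (inv v19) v31) (congrArg (mul v19) (congrArg (mul (inv v19)) (congrArg (mul v19) (R17 v19 v31))))) (R17 v19 (mul v19 v31))))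
  have R74 : ∀ v7 v11 v15 v23, (mul (mul v15 (mul v11 (mul v7 (mul v7 (mul v11 (mul v15 one)))))) v23) = (mul v15 (mul v11 (mul v7 (mul v7 (mul v11 (mul v15 v23)))))) := fun v7 v11 v15 v23 => (Eq.trans (Eq.symm (congrArg (fun t => mul t v23) (congrArg (mul v15) (congrArg (mul v11) (R6 v7 (mul v11 (mul v15 one))))))) (Eq.trans (R28 v11 (mul v7 v7) v15 v23) (congrArg (mul v15) (congrArg (mul v11) (R6 v7 (mul v11 (mul v15 v23)))))))
  have R75 : ∀ v10 v13 v21, (mul (mul v13 (mul (inv v13) (mul v10 one))) v21) = (mul v13 (mul (inv v13) (mul v10 (mul (inv v13) (mul v13 v21))))) := fun v10 v13 v21 => (Eq.trans (Eq.symm (congrArg (fun t => mul t v21) (congrArg (mul v13) (congrArg (mul (inv v13)) (congrArg (mul v10) (R15 v13)))))) (R28 (inv v13) v10 v13 v21))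
  have R76 : ∀ v10 v23 v25, (mul (mul v23 (mul (inv v23) (mul v10 (mul (inv v23) (mul v23 v23))))) v25) = (mul v23 (mul (mul (inv v23) (mul v10 one)) (mul v23 v25))) := fun v10 v23 v25 => (Eq.trans (Eq.symm (congrArg (fun t => mul t v25) (R75 v10 v23 v23))) (R3 v23 (mul (inv v23) (mul v10 one)) v25))
  have R77 : ∀ v7 v23 v31, (mul (mul v23 (mul (inv v23) (mul v7 (mul v7 one)))) v31) = (mul v23 (mul (inv v23) (mul v7 (mul v7 (mul (inv v23) (mul v23 v31)))))) := fun v7 v23 v31 => (Eq.trans (Eq.symm (congrArg (fun t => mul t v31) (congrArg (mul v23) (congrArg (mul (inv v23)) (R6 v7 one))))) (Eq.trans (R75 (mul v7 v7) v23 v31) (congrArg (mul v23) (congrArg (mul (inv v23)) (R6 v7 (mul (inv v23) (mul v23 v31)))))))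
  have R78 : ∀ v1 v2 v17 v25, (mul (mul v17 (mul (inv v17) (mul v1 (mul v2 (mul v1 one))))) v25) = (mul v17 (mul (inv v17) (mul v1 (mul v2 (mul v1 (mul (inv v17) (mul v17 v25))))))) := fun v1 v2 v17 v25 => (Eq.trans (Eq.symm (congrArg (fun t => mul t v25) (congrArg (mul v17) (congrArg (mul (inv v17)) (R3 v1 v2 one))))) (Eq.trans (R75 (mul (mul v1 v2) v1) v17 v25) (congrArg (mul v17) (congrArg (mul (inv v17)) (R3 v1 v2 (mul (inv v17) (mul v17 v25)))))))
  have R79 : ∀ v4 v16 v27, (mul (mul v4 (mul (inv (mul v4 one)) (mul v16 one))) v27) = (mul v4 (mul (inv (mul v4 one)) (mul v16 (mul (inv (mul v4 one)) (mul v4 v27))))) := fun v4 v16 v27 => (Eq.trans (Eq.symm (congrArg (fun t => mul t v27) (R4 v4 (mul (inv (mul v4 one)) (mul v16 one))))) (Eq.trans (Eq.trans (R75 v16 (mul v4 one) v27) (congrArg (mul (mul v4 one)) (congrArg (mul (inv (mul v4 one))) (congrArg (mul v16) (congrArg (mul (inv (mul v4 one))) (R4 v4 v27)))))) (R4 v4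 (mul (inv (mul v4 one)) (mul v16 (mul (inv (mul v4 one)) (mul v4 v27)))))))
  have R80 : ∀ v7 v20 v31, (mul (mul v7 (mul v7 (mul (inv (mul v7 v7)) (mul v20 one)))) v31) = (mul v7 (mul v7 (mul (inv (mul v7 v7)) (mul v20 (mul (inv (mul v7 v7)) (mul v7 (mul v7 v31))))))) := fun v7 v20 v31 => (Eq.trans (Eq.symm (congrArg (fun t => mul t v31) (R6 v7 (mul (inv (mul v7 v7)) (mul v20 one))))) (Eq.trans (Eq.trans (R75 v20 (mul v7 v7) v31) (congrArg (mul (mul v7 v7)) (congrArg (mul (inv (mul v7 v7))) (congrArg (mul v20) (congrArg (mul (inv (mul v7 v7))) (R6 v7 v31)))))) (R6 v7 (mul (inv (mul v7 v7)) (mul v20 (mul (inv (mul v7 v7)) (mul v7 (mul v7 v31))))))))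
  have R81 : ∀ v10 v26 v31, (mul (mul v26 (mul (inv v26) (mul v10 (mul (inv v26) (mul v26 (mul v26 one)))))) v31) = (mul v26 (mul (mul (inv v26) (mul v10 one)) (mul v26 v31))) := fun v10 v26 v31 => (Eq.trans (Eq.symm (congrArg (fun t => mul t v31) (R75 v10 v26 (mul v26 one)))) (R19 v26 (mul (inv v26) (mul v10 one)) v31))
  have R82 : ∀ v7 v33 v35, (mul (mul v33 (mul (inv v33) (mul v7 (mul v7 (mul (inv v33) (mul v33 v33)))))) v35) = (mul v33 (mul (mul (inv v33) (mul v7 (mul v7 one))) (mul v33 v35))) := fun v7 v33 v35 => (Eq.trans (Eq.symm (congrArg (fun t => mul t v35) (R77 v7 v33 v33))) (R3 v33 (mul (inv v33) (mul v7 (mul v7 one))) v35))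
  have R83 : ∀ v16 v29 v31, (mul (mul v29 (mul (inv (mul v29 one)) (mul v16 (mul (inv (mul v29 one)) (mul v29 v29))))) v31) = (mul v29 (mul (mul (inv (mul v29 one)) (mul v16 one)) (mul v29 v31))) := fun v16 v29 v31 => (Eq.trans (Eq.symm (congrArg (fun t => mul t v31) (R79 v29 v16 v29))) (R3 v29 (mul (inv (mul v29 one)) (mul v16 one)) v31))
  have R84 : ∀ v7 v14 v37, (mul (mul v14 (mul (inv (mul v14 one)) (mul v7 (mul v7 one)))) v37) = (mul v14 (mul (inv (mul v14 one)) (mul v7 (mul v7 (mul (inv (mul v14 one)) (mul v14 v37)))))) := fun v7 v14 v37 => (Eq.trans (Eq.symm (congrArg (fun t => mul t v37) (congrArg (mul v14) (congrArg (mul (inv (mul v14 one))) (R6 v7 one))))) (Eq.trans (R79 v14 (mul v7 v7) v37) (congrArg (mul v14) (congrArg (mul (inv (mul v14 one))) (R6 v7 (mul (inv (mul v14 one)) (mul v14 v37)))))))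
  have R85 : ∀ v24 v35, (mul (mul (mul v24 (inv v24)) (mul v24 (mul (mul v24 (inv v24)) (mul v24 (mul v24 (inv v24)))))) v35) = (mul (mul v24 (inv v24)) (mul v24 (mul (mul v24 (inv v24)) (mul (mul v24 (inv v24)) (mul v24 (mul (mul v24 (inv v24)) v35)))))) := fun v24 v35 => (Eq.trans (Eq.symm (congrArg (fun t => mul t v35) (R30 v24 (mul v24 (mul v24 (inv v24)))))) (Eq.trans (Eq.trans (R6 (mul v24 (mul v24 (inv v24))) v35) (congrArg (mul (mul v24 (mul v24 (inv v24)))) (R30 v24 v35))) (R30 v24 (mul (mul v24 (inv v24)) (mul v24 (mul (mul v24 (inv v24)) v35))))))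
  have R86 : ∀ v2 v15 v17, (mul v15 (mul (mul v2 (mul v15 (mul (mul v15 v2) one))) (mul v15 v17))) = (mul v15 (mul (mul v2 (mul v15 (mul v15 v2))) (mul v15 v17))) := fun v2 v15 v17 => (Eq.trans (Eq.symm (R3 v15 (mul v2 (mul v15 (mul (mul v15 v2) one))) v17)) (Eq.trans (congrArg (fun t => mul t v17) (R33 v2 v15 v15)) (R29 v2 v15 v17)))
  have R87 : ∀ v30 v31, (mul (mul v30 (mul (mul v30 (inv v30)) one)) v31) = (mul (mul v30 (inv v30)) (mul v30 (mul (mul v30 (inv v30)) v31))) := fun v30 v31 => (Eq.trans (Eq.symm (congrArg (fun t => mul t v31) (R17 v30 (mul (mul v30 (inv v30)) one)))) (R33 (inv v30) v30 v31))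
  have R88 : ∀ v1 v2 v18 v23, (mul (mul v18 (mul v1 (mul v2 (mul v1 (mul v18 (mul v18 one)))))) v23) = (mul v18 (mul (mul v1 (mul v2 (mul v1 (mul v18 one)))) (mul v18 v23))) := fun v1 v2 v18 v23 => (Eq.trans (Eq.symm (congrArg (fun t => mul t v23) (congrArg (mul v18) (R3 v1 v2 (mul v18 (mul v18 one)))))) (Eq.trans (R35 (mul (mul v1 v2) v1) v18 v23) (congrArg (mul v18) (congrArg (fun t => mul t (mul v18 v23)) (R3 v1 v2 (mul v18 one))))))
  have R89 : ∀ v2 v24 v29, (mul v24 (mul (mul (mul v2 (mul v24 one)) (mul v24 one)) (mul v24 v29))) = (mul v24 (mul (mul v2 (mul v24 (mul v24 one))) (mul v24 v29))) := fun v2 v24 v29 => (Eq.trans (Eq.symm (Eq.trans (congrArg (fun t => mul t v29) (R35 v2 v24 (mul v24 one))) (R35 (mul v2 (mul v24 one)) v24 v29))) (R19 v24 (mul v2 (mul v24 (mul v24 one))) v29))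
  have R90 : ∀ v19 v37, (mul (mul v19 (mul (inv v19) (mul (inv v19) (mul v19 (mul v19 (mul (inv v19) one)))))) v37) = (mul v19 (mul (inv v19) (mul (inv v19) (mul v19 (mul v19 (mul (inv v19) (mul (inv v19) (mul v19 v37)))))))) := fun v19 v37 => (Eq.trans (Eq.symm (congrArg (fun t => mul t v37) (R36 v19 (mul v19 (mul (inv v19) one))))) (Eq.trans (Eq.trans (R6 (mul v19 (mul (inv v19) one)) v37) (congrArg (mul (mul v19 (mul (inv v19) one))) (R36 v19 v37))) (R36 v19 (mul v19 (mul (inv v19) (mul (inv v19) (mul v19 v37)))))))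
  have R91 : ∀ v33 v35, (mul v33 (mul (mul (inv v33) (mul (inv v33) (mul v33 v33))) (mul v33 v35))) = (mul v33 (mul v33 v35)) := fun v33 v35 => (Eq.trans (Eq.symm (R3 v33 (mul (inv v33) (mul (inv v33) (mul v33 v33))) v35)) (Eq.trans (congrArg (fun t => mul t v35) (R37 v33 v33)) (R6 v33 v35)))
  have R92 : ∀ v49, (mul (inv v49) (mul (inv (inv v49)) (mul (inv (inv v49)) one))) = v49 := fun v49 => (Eq.trans (Eq.symm (congrArg (mul (inv v49)) (congrArg (mul (inv (inv v49))) (congrArg (mul (inv (inv v49))) (R2 v49))))) (R38 v49 v49))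
  have R93 : ∀ v49 v71, (mul (inv v49) (mul (inv (inv v49)) (mul (inv (inv v49)) (mul (inv (inv v49)) (mul (inv v49) v71))))) = (mul v49 v71) := fun v49 v71 => (Eq.trans (Eq.symm (R75 (inv (inv v49)) (inv v49) v71)) (congrArg (fun t => mul t v71) (R92 v49)))
  have R94 : ∀ v2 v25 v27, (mul (mul v25 (mul (mul v2 (mul v25 (mul v25 one))) (mul v25 v25))) v27) = (mul v25 (mul (mul (mul v2 (mul v25 one)) (mul v25 v25)) (mul v25 v27))) := fun v2 v25 v27 => (Eq.trans (Eq.symm (congrArg (fun t => mul t v27) (R45 v2 v25 v25))) (R3 v25 (mul (mul v2 (mul v25 one)) (mul v25 v25)) v27))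
  have R95 : ∀ v7 v31 v33, (mul (mul v31 (mul (mul v7 (mul v7 (mul v31 one))) (mul v31 v31))) v33) = (mul v31 (mul (mul v7 (mul v7 (mul v31 (mul v31 one)))) (mul v31 v33))) := fun v7 v31 v33 => (Eq.trans (Eq.symm (congrArg (fun t => mul t v33) (congrArg (mul v31) (congrArg (fun t => mul t (mul v31 v31)) (R6 v7 (mul v31 one)))))) (Eq.trans (R45 (mul v7 v7) v31 v33) (congrArg (mul v31) (congrArg (fun t => mul t (mul v31 v33)) (R6 v7 (mul v31 (mul v31 one)))))))
  have R96 : ∀ v8 v31 v33, (mul v31 (mul (mul (mul v31 v8) (mul v31 (mul v31 one))) (mul v31 v33))) = (mul (mul v31 (mul v31 (mul v8 (mul v31 (mul v31 v31))))) v33) := fun v8 v31 v33 => (Eq.trans (Eq.symm (R45 (mul v31 v8) v31 v33)) (congrArg (fun t => mul t v33) (congrArg (mul v31) (R19 v31 v8 (mul v31 v31)))))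
  have R97 : ∀ v30 v31, (mul (mul v30 (mul v30 (mul (inv v30) one))) v31) = (mul v30 (mul (inv v30) (mul (inv v30) (mul v30 (mul v30 (mul v30 (mul (inv v30) (mul (inv v30) (mul v30 v31))))))))) := fun v30 v31 => (Eq.trans (Eq.symm (congrArg (fun t => mul t v31) (R17 v30 (mul v30 (mul (inv v30) one))))) (Eq.trans (Eq.trans (R68 (inv v30) v30 v31) (congrArg (mul (mul v30 (mul (inv v30) one))) (congrArg (mul v30) (R36 v30 v31)))) (R36 v30 (mul v30 (mul v30 (mul (inv v30) (mul (inv v30) (mul v30 v31))))))))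
  have R98 : ∀ v33 v35, (mul (mul v33 (mul (inv v33) (mul (inv v33) (mul v33 (mul v33 (mul v33 (mul (inv v33) (mul (inv v33) (mul v33 v33))))))))) v35) = (mul v33 (mul v33 (mul (inv v33) (mul (inv v33) (mul v33 (mul v33 v35)))))) := fun v33 v35 => (Eq.trans (Eq.symm (congrArg (fun t => mul t v35) (R97 v33 v33))) (Eq.trans (R3 v33 (mul v33 (mul (inv v33) one)) v35) (congrArg (mul v33) (R36 v33 (mul v33 v35)))))
  have R99 : ∀ v30 v37, (mul (mul v30 (mul (inv v30) (mul (inv v30) (mul v30 (mul v30 (mul v30 (mul (inv v30) one))))))) v37) = (mul v30 (mul (inv v30) (mul (inv v30) (mul v30 (mul v30 (mul v30 (mul (inv v30) (mul (inv v30) (mul v30 v37))))))))) := fun v30 v37 => (Eq.trans (Eq.symm (Eq.trans (congrArg (fun t => mul t v37) (R97 v30 one)) (congrArg (fun t => mul t v37) (congrArg (mul v30) (congrArg (mul (inv v30)) (congrArg (mul (inv v30)) (congrArg (mul v30) (congrArg (mul v30) (congrArg (mul v30) (congrArg (mul (inv v30)) (R15 v30))))))))))) (Eq.trans (R4 (mul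 v30 (mul v30 (mul (inv v30) one))) v37) (R97 v30 v37)))
  have R100 : ∀ v36 v41, (mul (mul v36 (mul (inv v36) (mul (inv v36) (mul v36 (mul v36 (mul v36 (mul (inv v36) (mul (inv v36) (mul v36 (mul v36 one)))))))))) v41) = (mul v36 (mul v36 (mul (inv v36) (mul (inv v36) (mul v36 (mul v36 v41)))))) := fun v36 v41 => (Eq.trans (Eq.symm (congrArg (fun t => mul t v41) (R97 v36 (mul v36 one)))) (Eq.trans (R19 v36 (mul v36 (mul (inv v36) one)) v41) (congrArg (mul v36) (R36 v36 (mul v36 v41)))))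
  have R101 : ∀ v39 v45, (mul (mul v39 (mul (inv v39) (mul (inv v39) (mul v39 (mul v39 (mul v39 (mul (inv v39) (mul (inv v39) (mul v39 (mul v39 v39)))))))))) v45) = (mul v39 (mul v39 (mul v39 v45))) := fun v39 v45 => (Eq.trans (Eq.symm (congrArg (fun t => mul t v45) (R97 v39 (mul v39 v39)))) (Eq.trans (Eq.trans (R20 v39 (mul (inv v39) one) v45) (congrArg (mul v39) (congrArg (mul v39) (R4 (inv v39) (mul v39 (mul v39 v45)))))) (congrArg (mul v39) (R17 v39 (mul v39 v45)))))
  have R102 : ∀ v19 v41 v49, (mul (mul v41 (mul (inv v41) (mul v19 (mul (inv v19) one)))) v49) = (mul v41 (mul (inv v41) (mul v19 (mul (inv v19) (mul (inv v19) (mul v19 (mul (inv v41) (mul v41 v49)))))))) := fun v19 v41 v49 => (Eq.trans (Eq.symm (Eq.trans (congrArg (fun t => mul t v49) (congrArg (mul v41) (congrArg (mul (inv v41)) (R36 v19 one)))) (congrArg (fun t => mul t v49) (congrArg (mul v41) (congrArg (mul (inv v41)) (congrArg (mul v19) (congrArg (mul (inv v19)) (R15 v19)))))))) (Eq.trans (R75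 (mul v19 (mul (inv v19) one)) v41 v49) (congrArg (mul v41) (congrArg (mul (inv v41)) (R36 v19 (mul (inv v41) (mul v41 v49)))))))
  have R103 : ∀ v19 v51 v53, (mul (mul v51 (mul (inv v51) (mul v19 (mul (inv v19) (mul (inv v19) (mul v19 (mul (inv v51) (mul v51 v51)))))))) v53) = (mul v51 (mul (mul (inv v51) (mul v19 (mul (inv v19) one))) (mul v51 v53))) := fun v19 v51 v53 => (Eq.trans (Eq.symm (congrArg (fun t => mul t v53) (R102 v19 v51 v51))) (R3 v51 (mul (inv v51) (mul v19 (mul (inv v19) one))) v53))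
  have R104 : ∀ v11 v19, (mul v19 (mul v19 (mul (inv (mul v19 (mul v19 one))) (mul v19 (mul v19 v11))))) = (mul v19 (mul v19 v11)) := fun v11 v19 => (Eq.trans (Eq.symm (Eq.trans (Eq.trans (R6 v19 (mul (inv (mul (mul v19 v19) one)) (mul (mul v19 v19) v11))) (congrArg (mul v19) (congrArg (mul v19) (congrArg (fun t => mul t (mul (mul v19 v19) v11)) (congrArg inv (R6 v19 one)))))) (congrArg (mul v19) (congrArg (mul v19) (congrArg (mul (inv (mul v19 (mul v19 one)))) (R6 v19 v11)))))) (Eq.trans (R24 (mul v19 v19) v11) (R6 v19 v11)))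
  have R105 : ∀ v19 v23, (mul (inv v23) (mul (mul (inv (inv v23)) (mul (inv v23) v19)) one)) = (mul (inv v23) (mul v19 one)) := fun v19 v23 => (Eq.trans (Eq.symm (congrArg (mul (inv v23)) (congrArg (mul (mul (inv (inv v23)) (mul (inv v23) v19))) (R2 v23)))) (Eq.trans (R25 v19 (inv v23) v23) (congrArg (mul (inv v23)) (congrArg (mul v19) (R2 v23)))))
  have R106 : ∀ v17 v21 v23 v25, (mul v23 (mul (mul (mul (inv v23) (mul v23 v17)) (mul v23 v21)) (mul v23 v25))) = (mul v23 (mul (mul v17 (mul v23 v21)) (mul v23 v25))) := fun v17 v21 v23 v25 => (Eq.trans (Eq.symm (R3 v23 (mul (mul (inv v23) (mul v23 v17)) (mul v23 v21)) v25)) (Eq.trans (congrArg (fun t => mul t v25) (congrArg (fun t => mul t v23) (R25 v17 v23 v21))) (R3 v23 (mul v17 (mul v23 v21)) v25)))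
  have R107 : ∀ v24, (mul (inv (mul v24 (mul v24 (inv v24)))) (mul (mul v24 (inv v24)) (mul v24 (mul (mul v24 (inv v24)) one)))) = one := fun v24 => (Eq.trans (Eq.symm (congrArg (mul (inv (mul v24 (mul v24 (inv v24))))) (R30 v24 one))) (R15 (mul v24 (mul v24 (inv v24)))))
  have R108 : ∀ v16 v21, (mul v16 (mul (mul (inv (mul v16 (mul v16 one))) (mul v16 one)) (mul v16 v21))) = (mul v16 v21) := fun v16 v21 => (Eq.trans (Eq.symm (R35 (inv (mul v16 (mul v16 one))) v16 v21)) (Eq.trans (congrArg (fun t => mul t v21) (congrArg (mul v16) (R2 (mul v16 (mul v16 one))))) (R4 v16 v21)))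
  have R109 : ∀ v1 v2 v31, (mul (mul v1 (mul v2 (mul v1 (mul (inv (mul (mul v1 v2) v1)) one)))) v31) = (mul v1 (mul v2 (mul v1 (mul (inv (mul (mul v1 v2) v1)) (mul (inv (mul (mul v1 v2) v1)) (mul v1 (mul v2 (mul v1 v31)))))))) := fun v1 v2 v31 => (Eq.trans (Eq.symm (congrArg (fun t => mul t v31) (R3 v1 v2 (mul (inv (mul (mul v1 v2) v1)) one)))) (Eq.trans (Eq.trans (R36 (mul (mul v1 v2) v1) v31) (congrArg (mul (mul (mul v1 v2) v1)) (congrArg (mul (inv (mul (mul v1 v2) v1))) (congrArg (mul (inv (mul (mul v1 v2) v1))) (R3 v1 v2 v31))))) (R3 v1 v2 (mul (inv (mul (mul v1 v2) v1)) (mul (inv (mul (mul v1 v2) v1)) (mul v1 (mul v2 (mul v1 v31))))))))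
  have R110 : ∀ v12 v41, (mul (mul v12 (mul v12 (mul v12 (mul (inv (mul v12 (mul v12 v12))) one)))) v41) = (mul v12 (mul v12 (mul v12 (mul (inv (mul v12 (mul v12 v12))) (mul (inv (mul v12 (mul v12 v12))) (mul v12 (mul v12 (mul v12 v41)))))))) := fun v12 v41 => (Eq.trans (Eq.symm (congrArg (fun t => mul t v41) (R7 v12 (mul (inv (mul v12 (mul v12 v12))) one)))) (Eq.trans (Eq.trans (R36 (mul v12 (mul v12 v12)) v41) (congrArg (mul (mul v12 (mul v12 v12))) (congrArg (mul (inv (mul v12 (mul v12 v12)))) (congrArg (mul (inv (mul v12 (mul v12 v12)))) (R7 v12 v41))))) (R7 v12 (mul (inv (mul v12 (mul v12 v12))) (mul (inv (mul v12 (mul v12 v12))) (mul v12 (mul v12 (mul v12 v41))))))))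
  have R111 : ∀ v19 v42 v47, (mul (mul v42 (mul v19 (mul (inv v19) (mul (inv v19) (mul v19 (mul v42 (mul v42 one))))))) v47) = (mul v42 (mul (mul v19 (mul (inv v19) (mul (inv v19) (mul v19 (mul v42 one))))) (mul v42 v47))) := fun v19 v42 v47 => (Eq.trans (Eq.symm (congrArg (fun t => mul t v47) (congrArg (mul v42) (R36 v19 (mul v42 (mul v42 one)))))) (Eq.trans (R35 (mul v19 (mul (inv v19) one)) v42 v47) (congrArg (mul v42) (congrArg (fun t => mul t (mul v42 v47)) (R36 v19 (mul v42 one))))))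
  have R112 : ∀ v42 v47, (mul (mul v42 (mul v42 (mul (inv (mul v42 v42)) (mul (inv (mul v42 v42)) (mul v42 (mul v42 (mul v42 one))))))) v47) = (mul v42 (mul (mul v42 (mul (inv (mul v42 v42)) one)) (mul v42 v47))) := fun v42 v47 => (Eq.trans (Eq.symm (congrArg (fun t => mul t v47) (R40 v42 (mul v42 one)))) (R19 v42 (mul v42 (mul (inv (mul v42 v42)) one)) v47))
  have R113 : ∀ v45 v51, (mul (mul v45 (mul v45 (mul (inv (mul v45 v45)) (mul (inv (mul v45 v45)) (mul v45 (mul v45 (mul v45 v45))))))) v51) = (mul v45 (mul v45 v51)) := fun v45 v51 => (Eq.trans (Eq.symm (congrArg (fun t => mul t v51) (R40 v45 (mul v45 v45)))) (Eq.trans (Eq.trans (R20 v45 (mul (inv (mul v45 v45)) one) v51) (congrArg (mul v45) (congrArg (mul v45) (R4 (inv (mul v45 v45)) (mul v45 (mul v45 v51)))))) (R50 v51 v45)))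
  have R114 : ∀ v9, (mul (inv (mul (mul v9 (inv v9)) v9)) (mul v9 one)) = one := fun v9 => (Eq.trans (Eq.symm (congrArg (mul (inv (mul (mul v9 (inv v9)) v9))) (congrArg (mul v9) (R15 v9)))) (R48 v9 (inv v9)))
  have R115 : ∀ v11 v19, (mul v11 (mul (inv (mul (mul v11 (inv v11)) v11)) (mul v11 v19))) = (mul v11 v19) := fun v11 v19 => (Eq.trans (Eq.symm (R10 v11 (inv (mul (mul v11 (inv v11)) v11)) v19)) (Eq.trans (congrArg (fun t => mul t v19) (congrArg (mul v11) (R114 v11))) (R4 v11 v19)))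
  have R116 : ∀ v7 v41, (mul (mul v7 (mul v7 (mul v7 (mul v7 (inv (mul v7 (mul v7 one))))))) v41) = (mul (mul v7 (mul v7 (inv (mul v7 (mul v7 one))))) (mul v7 (mul v7 (mul (mul v7 (mul v7 (inv (mul v7 (mul v7 one))))) v41)))) := fun v7 v41 => (Eq.trans (Eq.symm (Eq.trans (Eq.trans (congrArg (fun t => mul t v41) (R6 v7 (mul (mul v7 v7) (inv (mul (mul v7 v7) one))))) (congrArg (fun t => mul t v41) (congrArg (mul v7) (congrArg (mul v7) (congrArg (mul (mul v7 v7)) (congrArg inv (R6 v7 one))))))) (congrArg (fun t => mul t v41) (congrArg (mul v7) (congrArg (mul v7) (R6 v7 (inv (mul v7 (mul v7 one))))))))) (Eq.trans (Eq.trans (Eq.trans (Eq.trans (Eq.trans (R52 (mul v7 v7) v41) (congrArg (fun t => mul t (mul (mul v7 v7) (mul (mul (mul v7 v7) (inv (mul (mul v7 v7) one))) v41))) (congrArg (mul (mul v7 v7)) (congrArg inv (R6 v7 one))))) (congrArg (fun t => mul t (mul (mul v7 v7) (mul (mul (mul v7 v7) (inv (mul (mul v7 v7) one))) v41))) (R6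 v7 (inv (mul v7 (mul v7 one)))))) (congrArg (mul (mul v7 (mul v7 (inv (mul v7 (mul v7 one)))))) (congrArg (mul (mul v7 v7)) (congrArg (fun t => mul t v41) (congrArg (mul (mul v7 v7)) (congrArg inv (R6 v7 one))))))) (congrArg (mul (mul v7 (mul v7 (inv (mul v7 (mul v7 one)))))) (congrArg (mul (mul v7 v7)) (congrArg (fun t => mul t v41) (R6 v7 (inv (mul v7 (mul v7 one)))))))) (congrArg (mul (mul v7 (mul v7 (inv (mul v7 (mul v7 one)))))) (R6 v7 (mul (mul v7 (mul v7 (inv (mul v7 (mul v7 one))))) v41)))))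
  have R117 : ∀ v39 v51, (mul (mul (mul v39 (inv (mul v39 one))) (mul v39 (mul (mul v39 (inv (mul v39 one))) (mul v39 (mul v39 one))))) v51) = (mul v39 (mul v39 (mul v39 v51))) := fun v39 v51 => (Eq.trans (Eq.symm (congrArg (fun t => mul t v51) (R52 v39 (mul v39 (mul v39 one))))) (Eq.trans (R34 v39 (inv (mul v39 one)) v51) (congrArg (mul v39) (R24 v39 (mul v39 v51)))))
  have R118 : ∀ v37 v39, (mul (mul (mul v37 (mul v37 (inv (mul v37 v37)))) (mul v37 (mul v37 (mul (mul v37 (mul v37 (inv (mul v37 v37)))) v37)))) v39) = (mul v37 (mul (mul v37 (mul v37 (mul v37 (inv (mul v37 v37))))) (mul v37 v39))) := fun v37 v39 => (Eq.trans (Eq.symm (congrArg (fun t => mul t v39) (R53 v37 v37))) (R3 v37 (mul v37 (mul v37 (mul v37 (inv (mul v37 v37))))) v39))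
  have R119 : ∀ v45 v47, (mul (mul v45 (mul v45 (mul (inv (mul v45 (mul v45 one))) (mul (inv (mul v45 (mul v45 one))) (mul v45 (mul v45 v45)))))) v47) = (mul v45 (mul (mul v45 (mul (inv (mul v45 (mul v45 one))) one)) (mul v45 v47))) := fun v45 v47 => (Eq.trans (Eq.symm (congrArg (fun t => mul t v47) (R57 v45 v45))) (R3 v45 (mul v45 (mul (inv (mul v45 (mul v45 one))) one)) v47))
  have R120 : ∀ v43, (mul (inv v43) (mul (mul (inv v43) (mul v43 v43)) one)) = one := fun v43 => (Eq.trans (Eq.symm (R59 (mul (inv v43) (mul v43 v43)) v43)) (Eq.trans (congrArg (mul (inv v43)) (R37 v43 one)) (R15 v43)))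
  have R121 : ∀ v57 v65, (mul v57 (mul (inv v57) (mul (mul (inv v57) (mul v57 v57)) (mul (inv v57) (mul v57 v65))))) = (mul v57 v65) := fun v57 v65 => (Eq.trans (Eq.symm (R75 (mul (inv v57) (mul v57 v57)) v57 v65)) (Eq.trans (congrArg (fun t => mul t v65) (congrArg (mul v57) (R120 v57))) (R4 v57 v65)))
  have R122 : ∀ v10 v13 v23 v31, (mul (mul v23 (mul v13 (mul (inv v13) (mul v10 (mul (inv v13) (mul v13 (mul v23 one))))))) v31) = (mul v23 (mul v13 (mul (inv v13) (mul v10 (mul (inv v13) (mul v13 (mul v23 v31))))))) := fun v10 v13 v23 v31 => (Eq.trans (Eq.symm (congrArg (fun t => mul t v31) (congrArg (mul v23) (R75 v10 v13 (mul v23 one))))) (Eq.trans (R10 v23 (mul v13 (mul (inv v13) (mul v10 one))) v31) (congrArg (mul v23) (R75 v10 v13 (mul v23 v31)))))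
  have R123 : ∀ v7 v33 v41, (mul (mul v33 (mul (inv v33) (mul v7 (mul v7 (mul v7 (mul v7 one)))))) v41) = (mul v33 (mul (inv v33) (mul v7 (mul v7 (mul v7 (mul v7 (mul (inv v33) (mul v33 v41)))))))) := fun v7 v33 v41 => (Eq.trans (Eq.symm (congrArg (fun t => mul t v41) (congrArg (mul v33) (congrArg (mul (inv v33)) (R14 v7 one))))) (Eq.trans (R75 (mul v7 (mul v7 (mul v7 v7))) v33 v41) (congrArg (mul v33) (congrArg (mul (inv v33)) (R14 v7 (mul (inv v33) (mul v33 v41)))))))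
  have R124 : ∀ v7 v17 v41, (mul (mul v7 (mul v7 (mul (inv (mul v7 v7)) (mul v17 (mul v17 one))))) v41) = (mul v7 (mul v7 (mul (inv (mul v7 v7)) (mul v17 (mul v17 (mul (inv (mul v7 v7)) (mul v7 (mul v7 v41)))))))) := fun v7 v17 v41 => (Eq.trans (Eq.symm (congrArg (fun t => mul t v41) (R6 v7 (mul (inv (mul v7 v7)) (mul v17 (mul v17 one)))))) (Eq.trans (Eq.trans (R77 v17 (mul v7 v7) v41) (congrArg (mul (mul v7 v7)) (congrArg (mul (inv (mul v7 v7))) (congrArg (mul v17) (congrArg (mul v17) (congrArg (mul (inv (mul v7 v7))) (R6 v7 v41))))))) (R6 v7 (mul (inv (mul v7 v7)) (mul v17 (mul v17 (mul (inv (mul v7 v7)) (mul v7 (mul v7 v41)))))))))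
  have R125 : ∀ v7 v36 v41, (mul (mul v36 (mul (inv v36) (mul v7 (mul v7 (mul (inv v36) (mul v36 (mul v36 one))))))) v41) = (mul v36 (mul (mul (inv v36) (mul v7 (mul v7 one))) (mul v36 v41))) := fun v7 v36 v41 => (Eq.trans (Eq.symm (congrArg (fun t => mul t v41) (R77 v7 v36 (mul v36 one)))) (R19 v36 (mul (inv v36) (mul v7 (mul v7 one))) v41))
  have R126 : ∀ v1 v2 v27 v29, (mul (mul v27 (mul (inv v27) (mul v1 (mul v2 (mul v1 (mul (inv v27) (mul v27 v27))))))) v29) = (mul v27 (mul (mul (inv v27) (mul v1 (mul v2 (mul v1 one)))) (mul v27 v29))) := fun v1 v2 v27 v29 => (Eq.trans (Eq.symm (congrArg (fun t => mul t v29) (R78 v1 v2 v27 v27))) (R3 v27 (mul (inv v27) (mul v1 (mul v2 (mul v1 one)))) v29))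
  have R127 : ∀ v7 v11 v27 v35, (mul (mul v27 (mul (inv v27) (mul v11 (mul v7 (mul v7 (mul v11 one)))))) v35) = (mul v27 (mul (inv v27) (mul v11 (mul v7 (mul v7 (mul v11 (mul (inv v27) (mul v27 v35)))))))) := fun v7 v11 v27 v35 => (Eq.trans (Eq.symm (congrArg (fun t => mul t v35) (congrArg (mul v27) (congrArg (mul (inv v27)) (congrArg (mul v11) (R6 v7 (mul v11 one))))))) (Eq.trans (R78 v11 (mul v7 v7) v27 v35) (congrArg (mul v27) (congrArg (mul (inv v27)) (congrArg (mul v11) (R6 v7 (mul v11 (mul (inv v27) (mul v27 v35)))))))))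
  have R128 : ∀ v1 v2 v8 v31, (mul (mul v8 (mul (inv (mul v8 one)) (mul v1 (mul v2 (mul v1 one))))) v31) = (mul v8 (mul (inv (mul v8 one)) (mul v1 (mul v2 (mul v1 (mul (inv (mul v8 one)) (mul v8 v31))))))) := fun v1 v2 v8 v31 => (Eq.trans (Eq.symm (congrArg (fun t => mul t v31) (congrArg (mul v8) (congrArg (mul (inv (mul v8 one))) (R3 v1 v2 one))))) (Eq.trans (R79 v8 (mul (mul v1 v2) v1) v31) (congrArg (mul v8) (congrArg (mul (inv (mul v8 one))) (R3 v1 v2 (mul (inv (mul v8 one)) (mul v8 v31)))))))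
  have R129 : ∀ v7 v26 v37, (mul (mul v7 (mul v7 (mul (inv (mul v7 (mul v7 one))) (mul v26 one)))) v37) = (mul v7 (mul v7 (mul (inv (mul v7 (mul v7 one))) (mul v26 (mul (inv (mul v7 (mul v7 one))) (mul v7 (mul v7 v37))))))) := fun v7 v26 v37 => (Eq.trans (Eq.symm (Eq.trans (congrArg (fun t => mul t v37) (R6 v7 (mul (inv (mul (mul v7 v7) one)) (mul v26 one)))) (congrArg (fun t => mul t v37) (congrArg (mul v7) (congrArg (mul v7) (congrArg (fun t => mul t (mul v26 one)) (congrArg inv (R6 v7 one)))))))) (Eq.trans (Eq.trans (Eq.trans (Eq.trans (R79 (mul v7 v7) v26 v37) (congrArg (mul (mul v7 v7)) (congrArg (fun t => mul t (mul v26 (mul (inv (mul (mul v7 v7) one)) (mul (mul v7 v7) v37)))) (congrArg inv (R6 v7 one))))) (congrArg (mul (mul v7 v7)) (congrArg (mul (inv (mul v7 (mul v7 one)))) (congrArg (mul v26) (congrArg (fun t => mul t (mul (mul v7 v7) v37)) (congrArg inv (R6 v7 one))))))) (congrArg (mul (mul v7 v7)) (congrArg (mul (inv (mul v7 (mul v7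 one)))) (congrArg (mul v26) (congrArg (mul (inv (mul v7 (mul v7 one)))) (R6 v7 v37)))))) (R6 v7 (mul (inv (mul v7 (mul v7 one))) (mul v26 (mul (inv (mul v7 (mul v7 one))) (mul v7 (mul v7 v37))))))))
  have R130 : ∀ v20 v33 v35, (mul (mul v33 (mul v33 (mul (inv (mul v33 v33)) (mul v20 (mul (inv (mul v33 v33)) (mul v33 (mul v33 v33))))))) v35) = (mul v33 (mul (mul v33 (mul (inv (mul v33 v33)) (mul v20 one))) (mul v33 v35))) := fun v20 v33 v35 => (Eq.trans (Eq.symm (congrArg (fun t => mul t v35) (R80 v33 v20 v33))) (R3 v33 (mul v33 (mul (inv (mul v33 v33)) (mul v20 one))) v35))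
  have R131 : ∀ v7 v39 v41, (mul (mul v39 (mul (inv (mul v39 one)) (mul v7 (mul v7 (mul (inv (mul v39 one)) (mul v39 v39)))))) v41) = (mul v39 (mul (mul (inv (mul v39 one)) (mul v7 (mul v7 one))) (mul v39 v41))) := fun v7 v39 v41 => (Eq.trans (Eq.symm (congrArg (fun t => mul t v41) (R84 v7 v39 v39))) (R3 v39 (mul (inv (mul v39 one)) (mul v7 (mul v7 one))) v41))
  have R132 : ∀ v4 v37, (mul (mul v4 (mul (mul v4 (inv (mul v4 one))) one)) v37) = (mul (mul v4 (inv (mul v4 one))) (mul v4 (mul (mul v4 (inv (mul v4 one))) v37))) := fun v4 v37 => (Eq.trans (Eq.symm (Eq.trans (congrArg (fun t => mul t v37) (R4 v4 (mul (mul (mul v4 one) (inv (mul v4 one))) one))) (congrArg (fun t => mul t v37) (congrArg (mul v4) (congrArg (fun t => mul t one) (R4 v4 (inv (mul v4 one)))))))) (Eq.trans (Eq.trans (Eq.trans (R87 (mul v4 one) v37) (congrArg (fun t => mul t (mul (mul v4 one) (mul (mul (mul v4 one) (inv (mul v4 one))) v37))) (R4 v4 (inv (mul v4 one))))) (congrArg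 (mul (mul v4 (inv (mul v4 one)))) (congrArg (mul (mul v4 one)) (congrArg (fun t => mul t v37) (R4 v4 (inv (mul v4 one))))))) (congrArg (mul (mul v4 (inv (mul v4 one)))) (R4 v4 (mul (mul v4 (inv (mul v4 one))) v37)))))
  have R133 : ∀ v7 v41, (mul (mul v7 (mul v7 (mul (mul v7 (mul v7 (inv (mul v7 v7)))) one))) v41) = (mul (mul v7 (mul v7 (inv (mul v7 v7)))) (mul v7 (mul v7 (mul (mul v7 (mul v7 (inv (mul v7 v7)))) v41)))) := fun v7 v41 => (Eq.trans (Eq.symm (Eq.trans (congrArg (fun t => mul t v41) (R6 v7 (mul (mul (mul v7 v7) (inv (mul v7 v7))) one))) (congrArg (fun t => mul t v41) (congrArg (mul v7) (congrArg (mul v7) (congrArg (fun t => mul t one) (R6 v7 (inv (mul v7 v7))))))))) (Eq.trans (Eq.trans (Eq.trans (R87 (mul v7 v7) v41) (congrArg (fun t => mul t (mul (mul v7 v7) (mul (mul (mul v7 v7) (inv (mul v7 v7))) v41))) (R6 v7 (inv (mul v7 v7))))) (congrArg (mul (mul v7 (mul v7 (inv (mul v7 v7))))) (congrArg (mul (mul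 v7 v7)) (congrArg (fun t => mul t v41) (R6 v7 (inv (mul v7 v7))))))) (congrArg (mul (mul v7 (mul v7 (inv (mul v7 v7))))) (R6 v7 (mul (mul v7 (mul v7 (inv (mul v7 v7)))) v41)))))
  have R134 : ∀ v49, (mul (inv (inv v49)) (mul (inv (inv v49)) one)) = (mul (inv (inv v49)) v49) := fun v49 => (Eq.trans (Eq.symm (R9 (inv v49) (mul (inv (inv v49)) one))) (congrArg (mul (inv (inv v49))) (R92 v49)))
  have R135 : ∀ v49 v65, (mul (mul (inv (inv v49)) v49) v65) = (mul (inv (inv v49)) (mul (inv (inv v49)) v65)) := fun v49 v65 => (Eq.trans (Eq.symm (congrArg (fun t => mul t v65) (R134 v49))) (R8 (inv (inv v49)) v65))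
  have R136 : ∀ v68 v69, (mul (inv (inv v68)) (mul (inv (inv v68)) (mul (inv (inv v68)) v69))) = (mul (inv (inv v68)) (mul v68 (mul (inv (inv v68)) v69))) := fun v68 v69 => (Eq.trans (Eq.symm (Eq.trans (congrArg (fun t => mul t v69) (R135 v68 (inv (inv v68)))) (R7 (inv (inv v68)) v69))) (R3 (inv (inv v68)) v68 v69))
  have R137 : ∀ v99, (mul (inv v99) (mul (inv (inv v99)) v99)) = v99 := fun v99 => (Eq.trans (Eq.symm (congrArg (mul (inv v99)) (R134 v99))) (R92 v99))
  have R138 : ∀ v49 v75, (mul (mul (inv (inv v49)) (mul v49 (mul (inv (inv v49)) v49))) v75) = (mul (inv (inv v49)) (mul (inv (inv v49)) (mul v49 (mul (inv (inv v49)) v75)))) := fun v49 v75 => (Eq.trans (Eq.symm (Eq.trans (congrArg (fun t => mul t v75) (R135 v49 (mul (inv (inv v49)) v49))) (congrArg (fun t => mul t v75) (R136 v49 v49)))) (Eq.trans (Eq.trans (Eq.trans (R6 (mul (inv (inv v49)) v49) v75) (congrArg (mul (mul (inv (inv v49)) v49)) (R135 v49 v75))) (R135 v49 (mul (inv (inv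 v49)) (mul (inv (inv v49)) v75)))) (congrArg (mul (inv (inv v49))) (R136 v49 v75))))
  have R139 : ∀ v74 v75, (mul (mul (inv (inv v74)) (mul (inv (inv v74)) v74)) v75) = (mul (inv (inv v74)) (mul v74 (mul (inv (inv v74)) v75))) := fun v74 v75 => (Eq.trans (Eq.symm (Eq.trans (congrArg (fun t => mul t v75) (R135 v74 (mul (inv (inv v74)) one))) (congrArg (fun t => mul t v75) (congrArg (mul (inv (inv v74))) (R134 v74))))) (R19 (inv (inv v74)) v74 v75))
  have R140 : ∀ v99 v103, (mul (mul v99 (inv v99)) v103) = v103 := fun v99 v103 => (Eq.trans (Eq.symm (congrArg (fun t => mul t v103) (congrArg (fun t => mul t (inv v99)) (R137 v99)))) (Eq.trans (Eq.trans (R3 (inv v99) (mul (inv (inv v99)) v99) v103) (congrArg (mul (inv v99)) (R135 v99 (mul (inv v99) v103)))) (R38 v99 v103)))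
  have R141 : ∀ v4 v109, (mul (mul v4 (inv (mul v4 one))) v109) = v109 := fun v4 v109 => (Eq.trans (Eq.symm (congrArg (fun t => mul t v109) (R4 v4 (inv (mul v4 one))))) (R140 (mul v4 one) v109))
  have R142 : ∀ v7 v113, (mul (mul v7 (mul v7 (inv (mul v7 v7)))) v113) = v113 := fun v7 v113 => (Eq.trans (Eq.symm (congrArg (fun t => mul t v113) (R6 v7 (inv (mul v7 v7))))) (R140 (mul v7 v7) v113))
  have R143 : ∀ v99, (mul (inv (mul v99 (inv v99))) one) = one := fun v99 => (Eq.trans (Eq.symm (congrArg (mul (inv (mul v99 (inv v99)))) (R140 v99 one))) (R15 (mul v99 (inv v99))))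
  have R144 : ∀ v99 v105, (mul (inv (mul v99 (inv v99))) v105) = v105 := fun v99 v105 => (Eq.trans (Eq.symm (R4 (inv (mul v99 (inv v99))) v105)) (Eq.trans (congrArg (fun t => mul t v105) (R143 v99)) (R1 v105)))
  have R145 : ∀ v99, (mul v99 (inv v99)) = one := fun v99 => (Eq.trans (Eq.symm (R144 v99 (mul v99 (inv v99)))) (R2 (mul v99 (inv v99))))
  have G1 : ∀ v1, (mul v1 (inv v1)) = one := fun v1 => (Eq.trans (R145 v1) (Eq.symm (Eq.refl one)))
  have R146 : ∀ v104, (mul v104 (inv (mul v104 one))) = one := fun v104 => (Eq.trans (Eq.symm (R4 v104 (inv (mul v104 one)))) (R145 (mul v104 one)))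
  have R147 : ∀ v107, (mul v107 (mul v107 (inv (mul v107 v107)))) = one := fun v107 => (Eq.trans (Eq.symm (R6 v107 (inv (mul v107 v107)))) (R145 (mul v107 v107)))
  have R148 : ∀ v109, (mul v109 (mul (inv v109) one)) = one := fun v109 => (Eq.trans (Eq.symm (congrArg (mul v109) (congrArg (mul (inv v109)) (R145 v109)))) (Eq.trans (R17 v109 (inv v109)) (R145 v109)))
  have R149 : ∀ v129 v137, (mul v129 (mul (inv v129) (mul (inv v129) (mul v129 v137)))) = v137 := fun v129 v137 => (Eq.trans (Eq.symm (R36 v129 v137)) (Eq.trans (congrArg (fun t => mul t v137) (R148 v129)) (R1 v137)))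
  have R150 : ∀ v112, (mul v112 (mul v112 (inv (mul v112 (mul v112 one))))) = one := fun v112 => (Eq.trans (Eq.symm (Eq.trans (R6 v112 (inv (mul (mul v112 v112) one))) (congrArg (mul v112) (congrArg (mul v112) (congrArg inv (R6 v112 one)))))) (R146 (mul v112 v112)))
  have R151 : ∀ v114, (mul v114 (mul (inv (mul v114 one)) one)) = one := fun v114 => (Eq.trans (Eq.symm (R4 v114 (mul (inv (mul v114 one)) one))) (R148 (mul v114 one)))
  have R152 : ∀ v117, (mul v117 (mul v117 (mul (inv (mul v117 v117)) one))) = one := fun v117 => (Eq.trans (Eq.symm (R6 v117 (mul (inv (mul v117 v117)) one))) (R148 (mul v117 v117)))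
  have R153 : ∀ v119 v148, (mul v119 (mul (inv (mul v119 one)) (mul (inv (mul v119 one)) (mul v119 v148)))) = v148 := fun v119 v148 => (Eq.trans (Eq.symm (R39 v119 v148)) (Eq.trans (congrArg (fun t => mul t v148) (R151 v119)) (R1 v148)))
  have R154 : ∀ v115 v117, (mul v115 (mul (mul v115 (inv (mul v115 v115))) (mul v115 v117))) = (mul v115 v117) := fun v115 v117 => (Eq.trans (Eq.symm (R3 v115 (mul v115 (inv (mul v115 v115))) v117)) (congrArg (fun t => mul t v117) (R142 v115 v115)))
  have R155 : ∀ v101 v102, (mul v101 (mul v102 (mul v101 (inv (mul (mul v101 v102) v101))))) = one := fun v101 v102 => (Eq.trans (Eq.symm (R3 v101 v102 (inv (mul (mul v101 v102) v101)))) (R145 (mul (mul v101 v102) v101)))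
  have R156 : ∀ v112, (mul v112 (mul v112 (mul v112 (inv (mul v112 (mul v112 v112)))))) = one := fun v112 => (Eq.trans (Eq.symm (R7 v112 (inv (mul v112 (mul v112 v112))))) (R145 (mul v112 (mul v112 v112))))
  have R157 : ∀ v149, (mul (inv (inv v149)) (mul (inv (inv v149)) (inv (mul (inv (inv v149)) v149)))) = one := fun v149 => (Eq.trans (Eq.symm (R135 v149 (inv (mul (inv (inv v149)) v149)))) (R145 (mul (inv (inv v149)) v149)))
  have R158 : ∀ v229, (mul v229 (mul (inv v229) (mul (inv v229) one))) = (inv v229) := fun v229 => (Eq.trans (Eq.symm (congrArg (mul v229) (congrArg (mul (inv v229)) (congrArg (mul (inv v229)) (R145 v229))))) (R149 v229 (inv v229)))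
  have R159 : ∀ v243 v251, (mul v243 (mul (inv v243) (mul (inv v243) (mul (inv v243) (mul v243 v251))))) = (mul (inv v243) v251) := fun v243 v251 => (Eq.trans (Eq.symm (R75 (inv v243) v243 v251)) (congrArg (fun t => mul t v251) (R158 v243)))
  have R160 : ∀ v122, (mul v122 (mul v122 (mul (inv (mul v122 (mul v122 one))) one))) = one := fun v122 => (Eq.trans (Eq.symm (Eq.trans (R6 v122 (mul (inv (mul (mul v122 v122) one)) one)) (congrArg (mul v122) (congrArg (mul v122) (congrArg (fun t => mul t one) (congrArg inv (R6 v122 one))))))) (R151 (mul v122 v122)))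
  have R161 : ∀ v125 v155, (mul v125 (mul v125 (mul (inv (mul v125 v125)) (mul (inv (mul v125 v125)) (mul v125 (mul v125 v155)))))) = v155 := fun v125 v155 => (Eq.trans (Eq.symm (R40 v125 v155)) (Eq.trans (congrArg (fun t => mul t v155) (R152 v125)) (R1 v155)))
  have R162 : ∀ v234, (mul (inv v234) (mul (inv v234) one)) = (mul (inv v234) (inv v234)) := fun v234 => (Eq.trans (Eq.symm (R9 v234 (mul (inv v234) one))) (congrArg (mul (inv v234)) (R158 v234)))
  have R163 : ∀ v284, (mul (inv (inv v284)) (inv (inv v284))) = (mul (inv (inv v284)) v284) := fun v284 => (Eq.trans (Eq.symm (R162 (inv v284))) (R134 v284))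
  have R164 : ∀ v464, (mul v464 (mul (inv v464) (inv v464))) = (inv v464) := fun v464 => (Eq.trans (Eq.symm (congrArg (mul v464) (R162 v464))) (R158 v464))
  have R165 : ∀ v284, (inv (inv v284)) = v284 := fun v284 => (Eq.trans (Eq.symm (R164 (inv v284))) (Eq.trans (congrArg (mul (inv v284)) (R163 v284)) (R137 v284)))
  have R166 : ∀ v384, (mul (inv v384) (mul v384 v384)) = v384 := fun v384 => (Eq.trans (Eq.symm (congrArg (mul (inv v384)) (congrArg (fun t => mul t v384) (R165 v384)))) (R137 v384))
  have R167 : ∀ v334, (mul v334 (mul v334 one)) = (mul v334 v334) := fun v334 => (Eq.trans (Eq.symm (Eq.trans (congrArg (fun t => mul t (mul (inv (inv v334)) one)) (R165 v334)) (congrArg (mul v334) (congrArg (fun t => mul t one) (R165 v334))))) (Eq.trans (R134 v334) (congrArg (fun t => mul t v334) (R165 v334))))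
  have R168 : ∀ v284 v312, (mul (inv v284) (mul v284 (mul v284 (mul (inv v284) v312)))) = v312 := fun v284 v312 => (Eq.trans (Eq.symm (Eq.trans (Eq.trans (R36 (inv v284) v312) (congrArg (mul (inv v284)) (congrArg (fun t => mul t (mul (inv (inv v284)) (mul (inv v284) v312))) (R165 v284)))) (congrArg (mul (inv v284)) (congrArg (mul v284) (congrArg (fun t => mul t (mul (inv v284) v312)) (R165 v284)))))) (Eq.trans (Eq.trans (congrArg (fun t => mul t v312) (congrArg (mul (inv v284)) (congrArg (fun t => mul t one) (R165 v284)))) (congrArg (fun t => mul t v312) (R15 v284))) (R1 v312)))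
  have R169 : ∀ v522, (mul v522 one) = v522 := fun v522 => (Eq.trans (Eq.symm (Eq.trans (congrArg (mul v522) (congrArg (mul (inv v522)) (R166 v522))) (congrArg (mul v522) (R2 v522)))) (R149 v522 v522))
  have G0 : ∀ v1, (mul v1 one) = v1 := fun v1 => (Eq.trans (R169 v1) (Eq.symm (Eq.refl v1)))
  have R170 : ∀ v524 v525, (mul (mul v524 v525) v524) = (mul v524 (mul v525 v524)) := fun v524 v525 => (Eq.trans (Eq.symm (R169 (mul (mul v524 v525) v524))) (Eq.trans (R3 v524 v525 one) (congrArg (mul v524) (congrArg (mul v525) (R169 v524)))))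
  have R171 : ∀ v527 v528 v529, (mul (mul v527 (mul v528 v527)) v529) = (mul v527 (mul v528 (mul v527 v529))) := fun v527 v528 v529 => (Eq.trans (Eq.symm (congrArg (fun t => mul t v529) (R170 v527 v528))) (R3 v527 v528 v529))
  have R172 : ∀ v528 v1054, (mul v1054 (mul (mul v528 v1054) v1054)) = (mul v1054 (mul v528 (mul v1054 v1054))) := fun v528 v1054 => (Eq.trans (Eq.symm (R170 v1054 (mul v528 v1054))) (R171 v1054 v528 v1054))
  have R173 : ∀ v527 v528, (mul (mul v527 v528) (mul v527 (mul v527 v528))) = (mul v527 (mul v528 (mul v527 (mul v527 v528)))) := fun v527 v528 => (Eq.trans (Eq.symm (R170 (mul v527 v528) v527)) (R3 v527 v528 (mul v527 v528)))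
  have R174 : ∀ v7 v535, (mul (mul v7 (mul v7 v535)) (mul v7 v7)) = (mul v7 (mul v7 (mul v535 (mul v7 v7)))) := fun v7 v535 => (Eq.trans (Eq.symm (congrArg (fun t => mul t (mul v7 v7)) (R6 v7 v535))) (Eq.trans (R170 (mul v7 v7) v535) (R6 v7 (mul v535 (mul v7 v7)))))
  have R175 : ∀ v528 v531 v533, (mul (mul v531 (mul v528 (mul v531 v531))) v533) = (mul v531 (mul (mul v528 v531) (mul v531 v533))) := fun v528 v531 v533 => (Eq.trans (Eq.symm (congrArg (fun t => mul t v533) (R171 v531 v528 v531))) (R3 v531 (mul v528 v531) v533))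
  have R176 : ∀ v7 v537 v539, (mul (mul v537 (mul v7 (mul v7 v537))) v539) = (mul v537 (mul v7 (mul v7 (mul v537 v539)))) := fun v7 v537 v539 => (Eq.trans (Eq.symm (congrArg (fun t => mul t v539) (congrArg (mul v537) (R6 v7 v537)))) (Eq.trans (R171 v537 (mul v7 v7) v539) (congrArg (mul v537) (R6 v7 (mul v537 v539)))))
  have R177 : ∀ v525 v1053 v1055, (mul (mul v1053 (mul v1053 (mul v525 v1053))) v1055) = (mul v1053 (mul (mul v1053 v525) (mul v1053 v1055))) := fun v525 v1053 v1055 => (Eq.trans (Eq.symm (congrArg (fun t => mul t v1055) (congrArg (mul v1053) (R170 v1053 v525)))) (R171 v1053 (mul v1053 v525) v1055))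
  have R178 : ∀ v2 v1058, (mul v1058 (mul (mul v1058 v2) (mul v1058 v1058))) = (mul v1058 (mul v1058 (mul v2 (mul v1058 v1058)))) := fun v2 v1058 => (Eq.trans (Eq.symm (R172 (mul v1058 v2) v1058)) (congrArg (mul v1058) (R3 v1058 v2 v1058)))
  have R179 : ∀ v7 v1064, (mul v1064 (mul (mul v7 (mul v7 v1064)) v1064)) = (mul v1064 (mul v7 (mul v7 (mul v1064 v1064)))) := fun v7 v1064 => (Eq.trans (Eq.symm (congrArg (mul v1064) (congrArg (fun t => mul t v1064) (R6 v7 v1064)))) (Eq.trans (R172 (mul v7 v7) v1064) (congrArg (mul v1064) (R6 v7 (mul v1064 v1064)))))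
  have R180 : ∀ v528 v1579, (mul v1579 (mul (mul v528 (mul v1579 v1579)) v1579)) = (mul v1579 (mul (mul v528 v1579) (mul v1579 v1579))) := fun v528 v1579 => (Eq.trans (Eq.symm (Eq.trans (congrArg (fun t => mul t v1579) (R172 v528 v1579)) (R170 v1579 (mul v528 (mul v1579 v1579))))) (Eq.trans (R170 v1579 (mul (mul v528 v1579) v1579)) (R172 (mul v528 v1579) v1579)))
  have R181 : ∀ v533 v536 v544, (mul (mul v536 (mul (inv v536) v533)) v544) = (mul v536 (mul (inv v536) (mul v533 (mul (inv v536) (mul v536 v544))))) := fun v533 v536 v544 => (Eq.trans (Eq.symm (congrArg (fun t => mul t v544) (congrArg (mul v536) (congrArg (mul (inv v536)) (R169 v533))))) (R75 v533 v536 v544))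
  have R182 : ∀ v533 v1069, (mul v1069 (mul (mul (inv v1069) v533) v1069)) = (mul v1069 (mul (inv v1069) (mul v533 v1069))) := fun v533 v1069 => (Eq.trans (Eq.symm (R170 v1069 (mul (inv v1069) v533))) (Eq.trans (R181 v533 v1069 v1069) (congrArg (mul v1069) (congrArg (mul (inv v1069)) (congrArg (mul v533) (R166 v1069))))))
  have R183 : ∀ v639, (mul v639 (mul v639 (mul (inv (mul v639 v639)) v639))) = v639 := fun v639 => (Eq.trans (Eq.symm (Eq.trans (R170 v639 (mul v639 (inv (mul v639 v639)))) (congrArg (mul v639) (R170 v639 (inv (mul v639 v639)))))) (R142 v639 v639))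
  have R184 : ∀ v17 v554 v562, (mul v554 (mul (inv v554) (mul (mul v554 v17) (mul (inv v554) (mul v554 v562))))) = (mul (mul v554 v17) v562) := fun v17 v554 v562 => (Eq.trans (Eq.symm (R181 (mul v554 v17) v554 v562)) (congrArg (fun t => mul t v562) (R17 v554 v17)))
  have R185 : ∀ v633 v644, (mul (inv v633) (mul v633 (mul v633 (mul v633 (mul (inv v633) v644))))) = (mul v633 v644) := fun v633 v644 => (Eq.trans (Eq.symm (Eq.trans (Eq.trans (R181 v633 (inv v633) v644) (congrArg (mul (inv v633)) (congrArg (fun t => mul t (mul v633 (mul (inv (inv v633)) (mul (inv v633) v644)))) (R165 v633)))) (congrArg (mul (inv v633)) (congrArg (mul v633) (congrArg (mul v633) (congrArg (fun t => mul t (mul (inv v633) v644)) (R165 v633))))))) (congrArg (fun t => mul t v644) (R137 v633)))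
  have R186 : ∀ v284 v818 v829, (mul (mul (inv v284) (mul v284 v818)) v829) = (mul (inv v284) (mul v284 (mul v818 (mul v284 (mul (inv v284) v829))))) := fun v284 v818 v829 => (Eq.trans (Eq.symm (congrArg (fun t => mul t v829) (congrArg (mul (inv v284)) (congrArg (fun t => mul t v818) (R165 v284))))) (Eq.trans (Eq.trans (R181 v818 (inv v284) v829) (congrArg (mul (inv v284)) (congrArg (fun t => mul t (mul v818 (mul (inv (inv v284)) (mul (inv v284) v829)))) (R165 v284)))) (congrArg (mul (inv v284)) (congrArg (mul v284) (congrArg (mul v818) (congrArg (fun t => mul t (mul (inv v284) v829)) (R165 v284)))))))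
  have R187 : ∀ v284 v818, (mul (inv v284) (mul (mul v284 v818) (inv v284))) = (mul (inv v284) (mul v284 (mul v818 (inv v284)))) := fun v284 v818 => (Eq.trans (Eq.symm (R170 (inv v284) (mul v284 v818))) (Eq.trans (R186 v284 v818 (inv v284)) (congrArg (mul (inv v284)) (congrArg (mul v284) (congrArg (mul v818) (R164 v284))))))
  have R188 : ∀ v528 v533, (mul (mul v533 v528) (mul v533 (mul v533 (mul v528 v533)))) = (mul v533 (mul v528 (mul v533 (mul v533 (mul v528 v533))))) := fun v528 v533 => (Eq.trans (Eq.symm (Eq.trans (R18 v528 v533 v533) (congrArg (mul (mul v533 v528)) (congrArg (mul v533) (R170 v533 v528))))) (Eq.trans (R170 v533 (mul v528 (mul v533 (mul v533 v528)))) (congrArg (mul v533) (R176 v533 v528 v533))))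
  have R189 : ∀ v1 v2 v531 v533, (mul (mul v531 (mul v1 (mul v2 (mul v1 v531)))) v533) = (mul v531 (mul v1 (mul v2 (mul v1 (mul v531 v533))))) := fun v1 v2 v531 v533 => (Eq.trans (Eq.symm (congrArg (fun t => mul t v533) (congrArg (mul v531) (R3 v1 v2 v531)))) (Eq.trans (Eq.trans (R171 v531 (mul (mul v1 v2) v1) v533) (congrArg (mul v531) (congrArg (fun t => mul t (mul v531 v533)) (R170 v1 v2)))) (congrArg (mul v531) (R171 v1 v2 (mul v531 v533)))))
  have R190 : ∀ v1 v2 v1058, (mul v1058 (mul (mul v1 (mul v2 (mul v1 v1058))) v1058)) = (mul v1058 (mul v1 (mul v2 (mul v1 (mul v1058 v1058))))) := fun v1 v2 v1058 => (Eq.trans (Eq.symm (congrArg (mul v1058) (congrArg (fun t => mul t v1058) (R3 v1 v2 v1058)))) (Eq.trans (Eq.trans (R172 (mul (mul v1 v2) v1) v1058) (congrArg (mul v1058) (congrArg (fun t => mul t (mul v1058 v1058)) (R170 v1 v2)))) (congrArg (mul v1058) (R171 v1 v2 (mul v1058 v1058)))))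
  have R191 : ∀ v528 v535 v537, (mul v535 (mul (mul (mul v528 v535) v535) (mul v535 v537))) = (mul v535 (mul (mul v528 (mul v535 v535)) (mul v535 v537))) := fun v528 v535 v537 => (Eq.trans (Eq.symm (Eq.trans (congrArg (fun t => mul t v537) (R175 v528 v535 v535)) (R175 (mul v528 v535) v535 v537))) (R3 v535 (mul v528 (mul v535 v535)) v537))
  have R192 : ∀ v7 v541 v543, (mul (mul v541 (mul v7 (mul v7 (mul v541 v541)))) v543) = (mul v541 (mul (mul v7 (mul v7 v541)) (mul v541 v543))) := fun v7 v541 v543 => (Eq.trans (Eq.symm (congrArg (fun t => mul t v543) (congrArg (mul v541) (R6 v7 (mul v541 v541))))) (Eq.trans (R175 (mul v7 v7) v541 v543) (congrArg (mul v541) (congrArg (fun t => mul t (mul v541 v543)) (R6 v7 v541)))))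
  have R193 : ∀ v7 v1063 v1065, (mul (mul v1063 (mul v1063 (mul v7 (mul v7 v1063)))) v1065) = (mul v1063 (mul (mul v1063 (mul v7 v7)) (mul v1063 v1065))) := fun v7 v1063 v1065 => (Eq.trans (Eq.symm (congrArg (fun t => mul t v1065) (congrArg (mul v1063) (congrArg (mul v1063) (R6 v7 v1063))))) (R177 (mul v7 v7) v1063 v1065))
  have R194 : ∀ v525 v1579 v1581, (mul (mul v1579 (mul v1579 (mul v1579 (mul v525 v1579)))) v1581) = (mul v1579 (mul (mul v1579 (mul v1579 v525)) (mul v1579 v1581))) := fun v525 v1579 v1581 => (Eq.trans (Eq.symm (congrArg (fun t => mul t v1581) (congrArg (mul v1579) (congrArg (mul v1579) (R170 v1579 v525))))) (R177 (mul v1579 v525) v1579 v1581))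
  have R195 : ∀ v2 v1583, (mul v1583 (mul v1583 (mul (mul v2 v1583) (mul v1583 v1583)))) = (mul v1583 (mul v1583 (mul v2 (mul v1583 (mul v1583 v1583))))) := fun v2 v1583 => (Eq.trans (Eq.symm (Eq.trans (Eq.trans (Eq.trans (congrArg (fun t => mul t v1583) (R178 v2 v1583)) (R170 v1583 (mul v1583 (mul v2 (mul v1583 v1583))))) (congrArg (mul v1583) (R170 v1583 (mul v2 (mul v1583 v1583))))) (congrArg (mul v1583) (R180 v2 v1583)))) (Eq.trans (Eq.trans (Eq.trans (R170 v1583 (mul (mul v1583 v2) (mul v1583 v1583))) (R180 (mul v1583 v2) v1583)) (congrArg (mul v1583) (congrArg (fun t => mul t (mul v1583 v1583)) (R170 v1583 v2)))) (congrArg (mul v1583) (R171 v1583 v2 (mul v1583 v1583)))))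
  have R196 : ∀ v7 v1589, (mul v1589 (mul (mul v7 (mul v7 (mul v1589 v1589))) v1589)) = (mul v1589 (mul (mul v7 (mul v7 v1589)) (mul v1589 v1589))) := fun v7 v1589 => (Eq.trans (Eq.symm (Eq.trans (congrArg (fun t => mul t v1589) (R179 v7 v1589)) (R170 v1589 (mul v7 (mul v7 (mul v1589 v1589)))))) (Eq.trans (R170 v1589 (mul (mul v7 (mul v7 v1589)) v1589)) (R172 (mul v7 (mul v7 v1589)) v1589)))
  have R197 : ∀ v528 v1599, (mul v1599 (mul (inv v1599) (mul (mul v528 (inv v1599)) v1599))) = (mul v1599 (mul (inv v1599) v528)) := fun v528 v1599 => (Eq.trans (Eq.symm (R182 (mul v528 (inv v1599)) v1599)) (Eq.trans (Eq.trans (congrArg (mul v1599) (R171 (inv v1599) v528 v1599)) (congrArg (mul v1599) (congrArg (mul (inv v1599)) (congrArg (mul v528) (R2 v1599))))) (congrArg (mul v1599) (congrArg (mul (inv v1599)) (R169 v528)))))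
  have R198 : ∀ v5 v290 v835, (mul (inv v290) (mul v290 (mul (mul (inv v290) v5) (mul v290 (mul (inv v290) v835))))) = (mul (mul (inv v290) v5) v835) := fun v5 v290 v835 => (Eq.trans (Eq.symm (R186 v290 (mul (inv v290) v5) v835)) (congrArg (fun t => mul t v835) (R9 v290 v5)))
  have R199 : ∀ v528 v814, (mul (inv v814) (mul v814 (mul (mul v528 v814) (inv v814)))) = (mul (inv v814) (mul v814 v528)) := fun v528 v814 => (Eq.trans (Eq.symm (R187 v814 (mul v528 v814))) (Eq.trans (Eq.trans (congrArg (mul (inv v814)) (R171 v814 v528 (inv v814))) (congrArg (mul (inv v814)) (congrArg (mul v814) (congrArg (mul v528) (R145 v814))))) (congrArg (mul (inv v814)) (congrArg (mul v814) (R169 v528)))))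
  have R200 : ∀ v7, (mul (inv (mul v7 v7)) (mul v7 (mul v7 (mul v7 v7)))) = (mul v7 v7) := fun v7 => (Eq.trans (Eq.symm (congrArg (mul (inv (mul v7 v7))) (R6 v7 (mul v7 v7)))) (R166 (mul v7 v7)))
  have R201 : ∀ v627 v628, (mul v627 (mul v628 (mul v627 (inv (mul v627 (mul v628 v627)))))) = one := fun v627 v628 => (Eq.trans (Eq.symm (congrArg (mul v627) (congrArg (mul v628) (congrArg (mul v627) (congrArg inv (R170 v627 v628)))))) (R155 v627 v628))
  have R202 : ∀ v533 v535, (mul v533 (mul (mul (inv (mul v533 v533)) v533) (mul v533 v535))) = (mul v533 v535) := fun v533 v535 => (Eq.trans (Eq.symm (R175 (inv (mul v533 v533)) v533 v535)) (Eq.trans (congrArg (fun t => mul t v535) (congrArg (mul v533) (R2 (mul v533 v533)))) (congrArg (fun t => mul t v535) (R169 v533))))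
  have R203 : ∀ v7 v543 v554, (mul (mul v7 (mul v7 (mul (inv (mul v7 v7)) v543))) v554) = (mul v7 (mul v7 (mul (inv (mul v7 v7)) (mul v543 (mul (inv (mul v7 v7)) (mul v7 (mul v7 v554))))))) := fun v7 v543 v554 => (Eq.trans (Eq.symm (congrArg (fun t => mul t v554) (R6 v7 (mul (inv (mul v7 v7)) v543)))) (Eq.trans (Eq.trans (R181 v543 (mul v7 v7) v554) (congrArg (mul (mul v7 v7)) (congrArg (mul (inv (mul v7 v7))) (congrArg (mul v543) (congrArg (mul (inv (mul v7 v7))) (R6 v7 v554)))))) (R6 v7 (mul (inv (mul v7 v7)) (mul v543 (mul (inv (mul v7 v7)) (mul v7 (mul v7 v554))))))))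
  have R204 : ∀ v533 v536 v1072 v1074, (mul (mul v1072 (mul v536 (mul (inv v536) (mul v533 (mul (inv v536) (mul v536 v1072)))))) v1074) = (mul v1072 (mul v536 (mul (inv v536) (mul v533 (mul (inv v536) (mul v536 (mul v1072 v1074))))))) := fun v533 v536 v1072 v1074 => (Eq.trans (Eq.symm (congrArg (fun t => mul t v1074) (congrArg (mul v1072) (R181 v533 v536 v1072)))) (Eq.trans (R171 v1072 (mul v536 (mul (inv v536) v533)) v1074) (congrArg (mul v1072) (R181 v533 v536 (mul v1072 v1074)))))
  have R205 : ∀ v533 v536 v1599, (mul v1599 (mul v536 (mul (inv v536) (mul (mul v533 (mul (inv v536) (mul v536 v1599))) (mul (inv v536) (mul v536 v1599)))))) = (mul v1599 (mul v536 (mul (inv v536) (mul v533 (mul (inv v536) (mul v536 (mul v1599 v1599))))))) := fun v533 v536 v1599 => (Eq.trans (Eq.symm (Eq.trans (congrArg (mul v1599) (congrArg (fun t => mul t v1599) (R181 v533 v536 v1599))) (congrArg (mul v1599) (R181 (mul v533 (mul (inv v536) (mul v536 v1599))) v536 v1599)))) (Eq.trans (R172 (mul v536 (mul (inv v536) v533))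 v1599) (congrArg (mul v1599) (R181 v533 v536 (mul v1599 v1599)))))
  have R206 : ∀ v533 v1603, (mul v1603 (mul v1603 (mul (mul (inv v1603) v533) (mul v1603 v1603)))) = (mul v1603 (mul v1603 (mul (inv v1603) (mul v533 (mul (inv v1603) (mul v1603 (mul v1603 v1603))))))) := fun v533 v1603 => (Eq.trans (Eq.symm (R178 (mul (inv v1603) v533) v1603)) (congrArg (mul v1603) (R181 v533 v1603 (mul v1603 v1603))))
  have R207 : ∀ v533 v2123 v2125, (mul (mul v2123 (mul v2123 (mul (inv v2123) (mul v533 v2123)))) v2125) = (mul v2123 (mul v2123 (mul (inv v2123) (mul v533 (mul (inv v2123) (mul v2123 (mul v2123 v2125))))))) := fun v533 v2123 v2125 => (Eq.trans (Eq.symm (congrArg (fun t => mul t v2125) (congrArg (mul v2123) (R182 v533 v2123)))) (Eq.trans (R177 (mul (inv v2123) v533) v2123 v2125) (congrArg (mul v2123) (R181 v533 v2123 (mul v2123 v2125)))))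
  have R208 : ∀ v7 v828 v839, (mul (mul (inv (mul v7 v7)) (mul v7 (mul v7 v828))) v839) = (mul (inv (mul v7 v7)) (mul v7 (mul v7 (mul v828 (mul v7 (mul v7 (mul (inv (mul v7 v7)) v839))))))) := fun v7 v828 v839 => (Eq.trans (Eq.symm (congrArg (fun t => mul t v839) (congrArg (mul (inv (mul v7 v7))) (R6 v7 v828)))) (Eq.trans (Eq.trans (R186 (mul v7 v7) v828 v839) (congrArg (mul (inv (mul v7 v7))) (congrArg (mul (mul v7 v7)) (congrArg (mul v828) (R6 v7 (mul (inv (mul v7 v7)) v839)))))) (congrArg (mul (inv (mul v7 v7))) (R6 v7 (mul v828 (mul v7 (mul v7 (mul (inv (mul v7 v7)) v839))))))))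
  have R209 : ∀ v525 v1344 v1355, (mul (mul (inv (mul v1344 v525)) (mul v1344 (mul v525 v1344))) v1355) = (mul (inv (mul v1344 v525)) (mul (mul v1344 v525) (mul v1344 (mul (mul v1344 v525) (mul (inv (mul v1344 v525)) v1355))))) := fun v525 v1344 v1355 => (Eq.trans (Eq.symm (congrArg (fun t => mul t v1355) (congrArg (mul (inv (mul v1344 v525))) (R170 v1344 v525)))) (R186 (mul v1344 v525) v1344 v1355))
  have R210 : ∀ v284 v818 v1357 v1359, (mul (mul v1357 (mul (inv v284) (mul v284 (mul v818 (mul v284 (mul (inv v284) v1357)))))) v1359) = (mul v1357 (mul (inv v284) (mul v284 (mul v818 (mul v284 (mul (inv v284) (mul v1357 v1359))))))) := fun v284 v818 v1357 v1359 => (Eq.trans (Eq.symm (congrArg (fun t => mul t v1359) (congrArg (mul v1357) (R186 v284 v818 v1357)))) (Eq.trans (R171 v1357 (mul (inv v284) (mul v284 v818)) v1359) (congrArg (mul v1357) (R186 v284 v818 (mul v1357 v1359)))))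
  have R211 : ∀ v284 v818 v1884, (mul v1884 (mul (inv v284) (mul v284 (mul (mul v818 (mul v284 (mul (inv v284) v1884))) (mul v284 (mul (inv v284) v1884)))))) = (mul v1884 (mul (inv v284) (mul v284 (mul v818 (mul v284 (mul (inv v284) (mul v1884 v1884))))))) := fun v284 v818 v1884 => (Eq.trans (Eq.symm (Eq.trans (congrArg (mul v1884) (congrArg (fun t => mul t v1884) (R186 v284 v818 v1884))) (congrArg (mul v1884) (R186 v284 (mul v818 (mul v284 (mul (inv v284) v1884))) v1884)))) (Eq.trans (R172 (mul (inv v284) (mul v284 v818)) v1884) (congrArg (mul v1884) (R186 v284 v818 (mul v1884 v1884)))))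
  have R212 : ∀ v543 v1079, (mul v1079 (mul v1079 (mul (mul (inv (mul v1079 v1079)) v543) v1079))) = (mul v1079 (mul v1079 (mul (inv (mul v1079 v1079)) (mul v543 (mul (inv (mul v1079 v1079)) (mul v1079 (mul v1079 v1079))))))) := fun v543 v1079 => (Eq.trans (Eq.symm (Eq.trans (R170 v1079 (mul v1079 (mul (inv (mul v1079 v1079)) v543))) (congrArg (mul v1079) (R170 v1079 (mul (inv (mul v1079 v1079)) v543))))) (R203 v1079 v543 v1079))
  have R213 : ∀ v1608 v1610, (mul v1608 (mul v1608 (mul (inv (mul v1608 v1608)) (mul v1608 (mul (inv (mul v1608 v1608)) (mul v1608 (mul v1608 v1610))))))) = (mul v1608 v1610) := fun v1608 v1610 => (Eq.trans (Eq.symm (R203 v1608 v1608 v1610)) (Eq.trans (R177 (inv (mul v1608 v1608)) v1608 v1610) (R154 v1608 v1610)))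
  have R214 : ∀ v533 v2650, (mul v2650 (mul v2650 (mul (inv v2650) (mul (mul v533 v2650) v2650)))) = (mul v2650 (mul v2650 (mul (inv v2650) (mul v533 (mul (inv v2650) (mul v2650 (mul v2650 v2650))))))) := fun v533 v2650 => (Eq.trans (Eq.symm (Eq.trans (Eq.trans (R170 v2650 (mul v2650 (mul (inv v2650) (mul v533 v2650)))) (congrArg (mul v2650) (R170 v2650 (mul (inv v2650) (mul v533 v2650))))) (congrArg (mul v2650) (R182 (mul v533 v2650) v2650)))) (R207 v533 v2650 v2650))
  have R215 : ∀ v15 v847, (mul (inv (mul v15 v15)) (mul v15 (mul v15 (mul v15 (mul v15 (mul (inv (mul v15 v15)) v847)))))) = v847 := fun v15 v847 => (Eq.trans (Eq.symm (Eq.trans (R208 v15 one v847) (congrArg (mul (inv (mul v15 v15))) (congrArg (mul v15) (congrArg (mul v15) (R1 (mul v15 (mul v15 (mul (inv (mul v15 v15)) v847))))))))) (Eq.trans (congrArg (fun t => mul t v847) (R16 v15)) (R1 v847)))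
  have R216 : ∀ v472, (mul v472 (mul v472 (mul (inv (mul v472 v472)) (inv (mul v472 v472))))) = (inv (mul v472 v472)) := fun v472 => (Eq.trans (Eq.symm (R6 v472 (mul (inv (mul v472 v472)) (inv (mul v472 v472))))) (R164 (mul v472 v472)))
  have R217 : ∀ v312 v322, (mul v322 (mul v322 (mul (inv v322) v312))) = (mul v322 v312) := fun v312 v322 => (Eq.trans (Eq.symm (R17 v322 (mul v322 (mul (inv v322) v312)))) (congrArg (mul v322) (R168 v322 v312)))
  have R218 : ∀ v284 v597, (mul (inv v284) (mul (inv v284) (mul v284 v597))) = (mul (inv v284) v597) := fun v284 v597 => (Eq.trans (Eq.symm (congrArg (mul (inv v284)) (congrArg (mul (inv v284)) (congrArg (fun t => mul t v597) (R165 v284))))) (R217 v597 (inv v284)))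
  have R219 : ∀ v607 v635, (mul (inv v607) (mul v607 v635)) = v635 := fun v607 v635 => (Eq.trans (Eq.symm (congrArg (mul (inv v607)) (R217 v635 v607))) (R168 v607 v635))
  have G3 : ∀ v1 v3, (mul (inv v1) (mul v1 v3)) = v3 := fun v1 v3 => (Eq.trans (R219 v1 v3) (Eq.symm (Eq.refl v3)))
  have R220 : ∀ v284 v920, (mul v284 (mul (inv v284) v920)) = v920 := fun v284 v920 => (Eq.trans (Eq.symm (congrArg (fun t => mul t (mul (inv v284) v920)) (R165 v284))) (R219 (inv v284) v920))
  have G2 : ∀ v1 v3, (mul v1 (mul (inv v1) v3)) = v3 := fun v1 v3 => (Eq.trans (R220 v1 v3) (Eq.symm (Eq.refl v3)))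
  have R221 : ∀ v7 v645, (mul (inv (mul v7 v7)) (mul v7 (mul v7 v645))) = v645 := fun v7 v645 => (Eq.trans (Eq.symm (congrArg (mul (inv (mul v7 v7))) (R6 v7 v645))) (R219 (mul v7 v7) v645))
  have R222 : ∀ v525 v1161, (mul (inv (mul v1161 v525)) (mul v1161 (mul v525 v1161))) = v1161 := fun v525 v1161 => (Eq.trans (Eq.symm (congrArg (mul (inv (mul v1161 v525))) (R170 v1161 v525))) (R219 (mul v1161 v525) v1161))
  have R223 : ∀ v528 v1662, (mul (mul v528 v1662) v1662) = (mul v528 (mul v1662 v1662)) := fun v528 v1662 => (Eq.trans (Eq.symm (R219 v1662 (mul (mul v528 v1662) v1662))) (Eq.trans (congrArg (mul (inv v1662)) (R172 v528 v1662)) (R219 v1662 (mul v528 (mul v1662 v1662)))))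
  have R224 : ∀ v1665 v1666, (mul (mul v1666 v1665) (mul v1666 v1666)) = (mul v1666 (mul v1665 (mul v1666 v1666))) := fun v1665 v1666 => (Eq.trans (Eq.symm (R223 (mul v1666 v1665) v1666)) (R3 v1666 v1665 v1666))
  have R225 : ∀ v7 v1672, (mul (mul v7 (mul v7 v1672)) v1672) = (mul v7 (mul v7 (mul v1672 v1672))) := fun v7 v1672 => (Eq.trans (Eq.symm (congrArg (fun t => mul t v1672) (R6 v7 v1672))) (Eq.trans (R223 (mul v7 v7) v1672) (R6 v7 (mul v1672 v1672))))
  have R226 : ∀ v528 v3325, (mul (mul v528 (mul v3325 v3325)) v3325) = (mul (mul v528 v3325) (mul v3325 v3325)) := fun v528 v3325 => (Eq.trans (Eq.symm (congrArg (fun t => mul t v3325) (R223 v528 v3325))) (R223 (mul v528 v3325) v3325))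
  have R227 : ∀ v1 v2 v1666, (mul (mul v1 (mul v2 (mul v1 v1666))) v1666) = (mul v1 (mul v2 (mul v1 (mul v1666 v1666)))) := fun v1 v2 v1666 => (Eq.trans (Eq.symm (congrArg (fun t => mul t v1666) (R3 v1 v2 v1666))) (Eq.trans (Eq.trans (R223 (mul (mul v1 v2) v1) v1666) (congrArg (fun t => mul t (mul v1666 v1666)) (R170 v1 v2))) (R171 v1 v2 (mul v1666 v1666))))
  have R228 : ∀ v528 v2188, (mul (mul v528 (mul v2188 v2188)) (mul v528 v2188)) = (mul (mul v528 v2188) (mul v2188 (mul v528 v2188))) := fun v528 v2188 => (Eq.trans (Eq.symm (congrArg (fun t => mul t (mul v528 v2188)) (R223 v528 v2188))) (R170 (mul v528 v2188) v2188))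
  have R229 : ∀ v2190 v2191, (mul v2190 (mul (mul v2191 v2190) (mul v2191 v2190))) = (mul v2190 (mul v2191 (mul v2190 (mul v2191 v2190)))) := fun v2190 v2191 => (Eq.trans (Eq.symm (R223 v2190 (mul v2191 v2190))) (R171 v2190 v2191 (mul v2191 v2190)))
  have R230 : ∀ v2194 v2195, (mul v2194 (mul (mul v2195 v2194) (mul v2194 v2194))) = (mul v2194 (mul v2195 (mul v2194 (mul v2194 v2194)))) := fun v2194 v2195 => (Eq.trans (Eq.symm (R224 (mul v2195 v2194) v2194)) (R171 v2194 v2195 (mul v2194 v2194)))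
  have R231 : ∀ v7 v3335, (mul (mul v7 (mul v7 (mul v3335 v3335))) v3335) = (mul (mul v7 (mul v7 v3335)) (mul v3335 v3335)) := fun v7 v3335 => (Eq.trans (Eq.symm (congrArg (fun t => mul t v3335) (R225 v7 v3335))) (R223 (mul v7 (mul v7 v3335)) v3335))
  have R232 : ∀ v920 v928, (mul v928 (mul v928 (mul (inv (mul v928 v928)) v920))) = v920 := fun v920 v928 => (Eq.trans (Eq.symm (R6 v928 (mul (inv (mul v928 v928)) v920))) (R220 (mul v928 v928) v920))
  have R233 : ∀ v1947 v2481, (mul (inv v1947) (mul (mul v1947 v2481) (mul v1947 v2481))) = (mul v2481 (mul v1947 v2481)) := fun v1947 v2481 => (Eq.trans (Eq.symm (R223 (inv v1947) (mul v1947 v2481))) (Eq.trans (Eq.trans (R186 v1947 v2481 (mul v1947 v2481)) (congrArg (mul (inv v1947)) (congrArg (mul v1947) (congrArg (mul v2481) (congrArg (mul v1947) (R219 v1947 v2481)))))) (R219 v1947 (mul v2481 (mul v1947 v2481)))))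
  have R234 : ∀ v528 v2298, (mul (inv (mul v528 v2298)) (mul v528 (mul v2298 v2298))) = v2298 := fun v528 v2298 => (Eq.trans (Eq.symm (congrArg (mul (inv (mul v528 v2298))) (R223 v528 v2298))) (R219 (mul v528 v2298) v2298))
  have R235 : ∀ v2200 v2203, (mul v2203 (mul (mul (inv v2203) v2200) (mul v2203 v2203))) = (mul v2200 (mul v2203 v2203)) := fun v2200 v2203 => (Eq.trans (Eq.symm (R224 (mul (inv v2203) v2200) v2203)) (Eq.trans (Eq.trans (R181 v2200 v2203 (mul v2203 v2203)) (congrArg (mul v2203) (congrArg (mul (inv v2203)) (congrArg (mul v2200) (R219 v2203 (mul v2203 v2203)))))) (R220 v2203 (mul v2200 (mul v2203 v2203)))))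
  have R236 : ∀ v3327, (mul (mul (inv (mul v3327 v3327)) v3327) (mul v3327 v3327)) = v3327 := fun v3327 => (Eq.trans (Eq.symm (R226 (inv (mul v3327 v3327)) v3327)) (Eq.trans (congrArg (fun t => mul t v3327) (R2 (mul v3327 v3327))) (R1 v3327)))
  have R237 : ∀ v715, (mul v715 (inv (mul v715 v715))) = (inv v715) := fun v715 => (Eq.trans (Eq.symm (R219 v715 (mul v715 (inv (mul v715 v715))))) (Eq.trans (congrArg (mul (inv v715)) (R147 v715)) (R169 (inv v715))))
  have R238 : ∀ v1240, (mul v1240 (mul (inv (mul v1240 v1240)) v1240)) = one := fun v1240 => (Eq.trans (Eq.symm (R170 v1240 (inv (mul v1240 v1240)))) (Eq.trans (congrArg (fun t => mul t v1240) (R237 v1240)) (R2 v1240)))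
  have R239 : ∀ v1323, (mul (inv v1323) (inv v1323)) = (inv (mul v1323 v1323)) := fun v1323 => (Eq.trans (Eq.symm (congrArg (mul (inv v1323)) (R237 v1323))) (R219 v1323 (inv (mul v1323 v1323))))
  have R240 : ∀ v1323 v1333, (mul (inv (mul v1323 v1323)) v1333) = (mul (inv v1323) (mul (inv v1323) v1333)) := fun v1323 v1333 => (Eq.trans (Eq.symm (congrArg (fun t => mul t v1333) (R239 v1323))) (R6 (inv v1323) v1333))
  have R241 : ∀ v1323, (mul (inv v1323) (mul (inv v1323) (inv (mul v1323 v1323)))) = (inv (mul v1323 (mul v1323 (mul v1323 v1323)))) := fun v1323 => (Eq.trans (Eq.symm (R240 v1323 (inv (mul v1323 v1323)))) (Eq.trans (R239 (mul v1323 v1323)) (congrArg inv (R6 v1323 (mul v1323 v1323)))))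
  have R242 : ∀ v1323 v1327, (mul (mul (inv v1323) (inv (mul v1323 v1323))) v1327) = (mul (inv v1323) (mul (inv v1323) (mul (inv v1323) v1327))) := fun v1323 v1327 => (Eq.trans (Eq.symm (Eq.trans (Eq.trans (congrArg (fun t => mul t v1327) (congrArg (fun t => mul t (inv v1323)) (R239 v1323))) (congrArg (fun t => mul t v1327) (R240 v1323 (inv v1323)))) (congrArg (fun t => mul t v1327) (congrArg (mul (inv v1323)) (R239 v1323))))) (R3 (inv v1323) (inv v1323) v1327))
  have R243 : ∀ v1323 v2989, (mul (mul (inv v1323) v2989) (inv (mul v1323 v1323))) = (mul (inv v1323) (mul v2989 (inv (mul v1323 v1323)))) := fun v1323 v2989 => (Eq.trans (Eq.symm (congrArg (mul (mul (inv v1323) v2989)) (R239 v1323))) (Eq.trans (R224 v2989 (inv v1323)) (congrArg (mul (inv v1323)) (congrArg (mul v2989) (R239 v1323)))))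
  have R244 : ∀ v1323 v1852, (mul (mul v1852 (inv (mul v1323 v1323))) (inv v1323)) = (mul (mul v1852 (inv v1323)) (inv (mul v1323 v1323))) := fun v1323 v1852 => (Eq.trans (Eq.symm (congrArg (fun t => mul t (inv v1323)) (congrArg (mul v1852) (R239 v1323)))) (Eq.trans (R226 v1852 (inv v1323)) (congrArg (mul (mul v1852 (inv v1323))) (R239 v1323))))
  have R245 : ∀ v7 v1343, (mul (inv (mul v7 (mul v7 (mul v7 v7)))) v1343) = (mul (inv v7) (mul (inv v7) (mul (inv v7) (mul (inv v7) v1343)))) := fun v7 v1343 => (Eq.trans (Eq.symm (congrArg (fun t => mul t v1343) (congrArg inv (R6 v7 (mul v7 v7))))) (Eq.trans (Eq.trans (R240 (mul v7 v7) v1343) (congrArg (mul (inv (mul v7 v7))) (R240 v7 v1343))) (R240 v7 (mul (inv v7) (mul (inv v7) v1343)))))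
  have R246 : ∀ v533 v1677, (mul (mul (inv v1677) v533) v1677) = (mul (inv v1677) (mul v533 v1677)) := fun v533 v1677 => (Eq.trans (Eq.symm (R219 v1677 (mul (mul (inv v1677) v533) v1677))) (Eq.trans (congrArg (mul (inv v1677)) (R182 v533 v1677)) (congrArg (mul (inv v1677)) (R220 v1677 (mul v533 v1677)))))
  have R247 : ∀ v284 v818, (mul (mul v284 v818) (inv v284)) = (mul v284 (mul v818 (inv v284))) := fun v284 v818 => (Eq.trans (Eq.symm (congrArg (fun t => mul t (inv v284)) (congrArg (fun t => mul t v818) (R165 v284)))) (Eq.trans (R246 v818 (inv v284)) (congrArg (fun t => mul t (mul v818 (inv v284))) (R165 v284))))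
  have R248 : ∀ v533 v3340, (mul (mul (inv v3340) v533) (mul v3340 v3340)) = (mul (inv v3340) (mul v533 (mul v3340 v3340))) := fun v533 v3340 => (Eq.trans (Eq.symm (R223 (mul (inv v3340) v533) v3340)) (Eq.trans (Eq.trans (congrArg (fun t => mul t v3340) (R246 v533 v3340)) (R246 (mul v533 v3340) v3340)) (congrArg (mul (inv v3340)) (R223 v533 v3340))))
  have R249 : ∀ v1346 v1347, (mul v1346 (mul (mul v1347 v1346) (inv v1346))) = (mul v1346 v1347) := fun v1346 v1347 => (Eq.trans (Eq.symm (R247 v1346 (mul v1347 v1346))) (Eq.trans (Eq.trans (R171 v1346 v1347 (inv v1346)) (congrArg (mul v1346) (congrArg (mul v1347) (R145 v1346)))) (congrArg (mul v1346) (R169 v1347))))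
  have R250 : ∀ v2206 v2207, (mul (inv v2207) (mul (mul v2206 (inv v2207)) v2207)) = (mul (inv v2207) v2206) := fun v2206 v2207 => (Eq.trans (Eq.symm (R246 (mul v2206 (inv v2207)) v2207)) (Eq.trans (Eq.trans (R171 (inv v2207) v2206 v2207) (congrArg (mul (inv v2207)) (congrArg (mul v2206) (R2 v2207)))) (congrArg (mul (inv v2207)) (R169 v2206))))
  have R251 : ∀ v284 v818, (mul (mul v284 v818) (inv (mul v284 v284))) = (mul v284 (mul v818 (inv (mul v284 v284)))) := fun v284 v818 => (Eq.trans (Eq.symm (Eq.trans (R223 (mul v284 v818) (inv v284)) (congrArg (mul (mul v284 v818)) (R239 v284)))) (Eq.trans (Eq.trans (Eq.trans (congrArg (fun t => mul t (inv v284)) (R247 v284 v818)) (R247 v284 (mul v818 (inv v284)))) (congrArg (mul v284) (R223 v818 (inv v284)))) (congrArg (mul v284) (congrArg (mul v818) (R239 v284)))))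
  have R252 : ∀ v820 v821, (mul (mul v820 v821) (mul v820 (inv (mul v820 v821)))) = (mul v820 (mul v821 (mul v820 (inv (mul v820 v821))))) := fun v820 v821 => (Eq.trans (Eq.symm (R247 (mul v820 v821) v820)) (R3 v820 v821 (inv (mul v820 v821))))
  have R253 : ∀ v284 v818, (mul (mul v284 (mul v818 (inv v284))) (mul v284 v818)) = (mul v284 (mul v818 v818)) := fun v284 v818 => (Eq.trans (Eq.symm (congrArg (fun t => mul t (mul v284 v818)) (R247 v284 v818))) (Eq.trans (Eq.trans (R170 (mul v284 v818) (inv v284)) (congrArg (mul (mul v284 v818)) (R219 v284 v818))) (R223 v284 v818)))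
  have R254 : ∀ v528 v1339, (mul v1339 (mul (mul v528 (mul v1339 v1339)) (inv v1339))) = (mul v1339 (mul v528 v1339)) := fun v528 v1339 => (Eq.trans (Eq.symm (Eq.trans (R247 v1339 (mul (mul v528 v1339) v1339)) (congrArg (mul v1339) (congrArg (fun t => mul t (inv v1339)) (R223 v528 v1339))))) (Eq.trans (Eq.trans (Eq.trans (congrArg (fun t => mul t (inv v1339)) (R172 v528 v1339)) (R175 v528 v1339 (inv v1339))) (congrArg (mul v1339) (congrArg (mul (mul v528 v1339)) (R145 v1339)))) (congrArg (mul v1339) (R169 (mul v528 v1339)))))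
  have R255 : ∀ v826 v1356, (mul v1356 (mul (mul v826 (mul v826 v1356)) (inv v1356))) = (mul v1356 (mul v826 v826)) := fun v826 v1356 => (Eq.trans (Eq.symm (R247 v1356 (mul v826 (mul v826 v1356)))) (Eq.trans (Eq.trans (R176 v826 v1356 (inv v1356)) (congrArg (mul v1356) (congrArg (mul v826) (congrArg (mul v826) (R145 v1356))))) (congrArg (mul v1356) (congrArg (mul v826) (R169 v826)))))
  have R256 : ∀ v528 v2481, (mul (mul v528 (mul v2481 v2481)) (inv (mul v528 v2481))) = (mul (mul v528 v2481) (mul v2481 (inv (mul v528 v2481)))) := fun v528 v2481 => (Eq.trans (Eq.symm (congrArg (fun t => mul t (inv (mul v528 v2481))) (R223 v528 v2481))) (R247 (mul v528 v2481) v2481))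
  have R257 : ∀ v1347 v1872, (mul v1872 (mul (mul (mul v1347 v1872) (inv v1872)) v1872)) = (mul v1872 (mul v1347 v1872)) := fun v1347 v1872 => (Eq.trans (Eq.symm (R170 v1872 (mul (mul v1347 v1872) (inv v1872)))) (Eq.trans (congrArg (fun t => mul t v1872) (R249 v1872 v1347)) (R170 v1872 v1347)))
  have R258 : ∀ v1346 v1347, (mul v1346 (mul (mul v1347 v1346) (inv (mul v1346 v1346)))) = (mul v1346 (mul v1347 (inv v1346))) := fun v1346 v1347 => (Eq.trans (Eq.symm (R251 v1346 (mul v1347 v1346))) (Eq.trans (R171 v1346 v1347 (inv (mul v1346 v1346))) (congrArg (mul v1346) (congrArg (mul v1347) (R237 v1346)))))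
  have R259 : ∀ v1164 v1450, (mul (mul v1164 v1450) (inv v1450)) = v1164 := fun v1164 v1450 => (Eq.trans (Eq.symm (R219 v1450 (mul (mul v1164 v1450) (inv v1450)))) (Eq.trans (R199 v1164 v1450) (R219 v1450 v1164)))
  have G4 : ∀ v1 v3, (mul (mul v3 v1) (inv v1)) = v3 := fun v1 v3 => (Eq.trans (R259 v3 v1) (Eq.symm (Eq.refl v3)))
  have R260 : ∀ v7 v1460, (mul (mul v7 (mul v7 v1460)) (inv v1460)) = (mul v7 v7) := fun v7 v1460 => (Eq.trans (Eq.symm (congrArg (fun t => mul t (inv v1460)) (R6 v7 v1460))) (R259 (mul v7 v7) v1460))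
  have R261 : ∀ v284 v1449, (mul (mul v1449 (inv v284)) v284) = v1449 := fun v284 v1449 => (Eq.trans (Eq.symm (congrArg (mul (mul v1449 (inv v284))) (R165 v284))) (R259 v1449 (inv v284)))
  have G5 : ∀ v1 v3, (mul (mul v3 (inv v1)) v1) = v3 := fun v1 v3 => (Eq.trans (R261 v1 v3) (Eq.symm (Eq.refl v3)))
  refine ⟨G0, G1, fun a b => ⟨⟨mul (inv a) b, G2 a b, ?_⟩, ⟨mul b (inv a), G5 a b, ?_⟩⟩⟩
  · intro y hy
    have := G3 a y
    rw [hy] at this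
    exact this.symm
  · intro y hy
    have := G4 a y
    rw [hy] at this
    exact this.symm
end

section
/- Let Q be a set with a binary operation ·, an element 1, and a map x ↦ x' such that 1·x = x (1 is a left neutral element) and x'·x = 1 (left inverses) for all x ∈ Q. If Q satisfies the Moufang identity x·(y·(z·y)) = ((x·y)·z)·y for all x, y, z, then Q is a loop: 1 is a two-sided neutral element, every x' is a two-sided inverse of x, and for all a, b the equations a·x = b and y·a = b have unique solutions. -/
/-- A groupoid with a left neutral element and left inverses
satisfying the Moufang identity (M2) is a loop. -/
theorem stmt_16 {Q : Type*} (mul : Q → Q → Q) (one : Q) (inv : Q → Q)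
    (h_one_left : ∀ x, mul one x = x)
    (h_inv_left : ∀ x, mul (inv x) x = one)
    (h_m2 : ∀ x y z, mul x (mul y (mul z y)) = mul (mul (mul x y) z) y) :
    (∀ x, mul x one = x) ∧
    (∀ x, mul x (inv x) = one) ∧
    (∀ a b : Q, (∃! x : Q, mul a x = b) ∧ (∃! y : Q, mul y a = b)) := by
  -- flexible law
  have flex : ∀ y z, mul y (mul z y) = mul (mul y z) y := fun y z => by
    have h := h_m2 one y z
    rwa [h_one_left, h_one_left] at h
  -- C : y·1 = (y·y')·y
  have hC : ∀ y, mul y one = mul (mul y (inv y)) y := fun y => by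
    have h := flex y (inv y)
    rwa [h_inv_left] at h
  -- D : y'·(y·1) = 1
  have hD : ∀ y, mul (inv y) (mul y one) = one := fun y => by
    have h := h_m2 (inv y) y (inv y)
    rwa [h_inv_left y, h_one_left, h_inv_left y] at h
  -- H : (y·1)·y' = 1
  have hH : ∀ y, mul (mul y one) (inv y) = one := fun y => by
    have h := h_m2 (inv (inv y)) (inv y) (mul y one)
    rw [h_inv_left (inv y), h_one_left, flex (inv y) (mul y one), hD y,
      h_one_left, h_inv_left (inv y)] at h
    exact h.symm
  -- T1 : y·y' = 1
  have hT1 : ∀ y, mul y (inv y) = one := fun y => by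
    have h := h_m2 y (inv y) y
    rw [flex (inv y) y, h_inv_left y, h_one_left, ← hC y, hH y] at h
    exact h
  -- T2 : y·1 = y
  have hT2 : ∀ y, mul y one = y := fun y => by
    rw [hC y, hT1 y, h_one_left]
  -- y·(y'·y') = y'
  have h6 : ∀ y, mul y (mul (inv y) (inv y)) = inv y := fun y => by
    have h := h_m2 y (inv y) one
    rwa [h_one_left, hT1 y, hT2 one, h_one_left] at h
  -- explicit right division : ((x·y)·(y'·y'))·y = x
  have h14 : ∀ x y, mul (mul (mul x y) (mul (inv y) (inv y))) y = x := fun x y => by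
    have h := h_m2 x y (mul (inv y) (inv y))
    rw [flex y (mul (inv y) (inv y)), h6 y, h_inv_left y, hT2 x] at h
    exact h.symm
  -- left inverse property : y'·(y·w) = w
  have hLIP : ∀ y w, mul (inv y) (mul y w) = w := fun y w => by
    have h := h_m2 (inv y) y (mul (mul w y) (mul (inv y) (inv y)))
    rwa [h14 w y, h_inv_left y, h_one_left, h14 w y] at h
  -- inv is involutive
  have hT7 : ∀ y, inv (inv y) = y := fun y => by
    have h := hLIP (inv y) y
    rwa [h_inv_left y, hT2 (inv (inv y))] at h
  -- companion LIP : y·(y'·w) = w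
  have hT4 : ∀ y w, mul y (mul (inv y) w) = w := fun y w => by
    have h := hLIP (inv y) w
    rwa [hT7 y] at h
  -- (w·y')·y = w
  have h15 : ∀ y w, mul (mul w (inv y)) y = w := fun y w => by
    have h := h_m2 (mul (mul w y) (mul (inv y) (inv y))) y (inv y)
    rw [h_inv_left y, hT2 y, h14 w y] at h
    exact h.symm
  -- right inverse property : (w·y)·y' = w
  have hRIP : ∀ y w, mul (mul w y) (inv y) = w := fun y w => by
    have h := h15 (inv y) w
    rwa [hT7 y] at h
  refine ⟨hT2, hT1, fun a b => ⟨⟨mul (inv a) b, hT4 a b, ?_⟩,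
    ⟨mul b (inv a), h15 a b, ?_⟩⟩⟩
  · intro x hx
    rw [← hx, hLIP a x]
  · intro u hu
    rw [← hu, hRIP a u]
end

section
/- Let Q be a set with a binary operation ·, an element 1, and a map x ↦ x' such that 1·x = x (1 is a left neutral element) and x'·x = 1 (left inverses) for all x ∈ Q. If Q satisfies the C-identity x·(y·(y·z)) = ((x·y)·y)·z for all x, y, z, then Q is a loop: 1 is a two-sided neutral element, every x' is a two-sided inverse of x, and for all a, b the equations a·x = b and y·a = b have unique solutions. -/
/-- A groupoid with a left neutral element and left inverses
satisfying the C-identity is a loop. -/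
theorem stmt_17 {Q : Type*} (mul : Q → Q → Q) (one : Q) (inv : Q → Q)
    (h_one_left : ∀ x, mul one x = x)
    (h_inv_left : ∀ x, mul (inv x) x = one)
    (h_c : ∀ x y z, mul x (mul y (mul y z)) = mul (mul (mul x y) y) z) :
    (∀ x, mul x one = x) ∧
    (∀ x, mul x (inv x) = one) ∧
    (∀ a b : Q, (∃! x : Q, mul a x = b) ∧ (∃! y : Q, mul y a = b)) := by
  have l3 : ∀ x z, mul (mul x x) z = mul x (mul x z) := fun x z => by
    have h := h_c one x z
    simp only [h_one_left] at h
    exact h.symm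
  have l4 : ∀ x z, mul (inv x) (mul x (mul x z)) = mul x z := fun x z => by
    have h := h_c (inv x) x z
    rw [h_inv_left, h_one_left] at h
    exact h
  have l6 : ∀ x, mul (inv (inv x)) (mul (inv x) one) = one := fun x => by
    have h := l4 (inv x) x
    rw [h_inv_left] at h
    exact h
  have l16 : ∀ x z w, mul (mul x (mul z (mul z z))) w
      = mul (mul x z) (mul z (mul z w)) := fun x z w => by
    rw [h_c x z z]
    exact (h_c (mul x z) z w).symm
  have l17 : ∀ z w, mul (mul (inv (mul z (mul z z))) z) (mul z (mul z w)) = w :=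
    fun z w => by
    have h := l16 (inv (mul z (mul z z))) z w
    rw [h_inv_left, h_one_left] at h
    exact h.symm
  have l18 : ∀ x z w, mul (mul (mul x (mul x z)) z) w
      = mul x (mul x (mul z (mul z w))) := fun x z w => by
    rw [← l3 x z, ← h_c (mul x x) z w]
    exact l3 x (mul z (mul z w))
  have l19 : ∀ x z, mul (inv (inv x)) (mul (inv x) (mul x z)) = mul x z :=
    fun x z => by
    conv_lhs => rw [← l4 x z]
    rw [l4 (inv x) (mul x (mul x z))]
    exact l4 x z
  have l20 : ∀ x, mul (inv (inv (inv x))) one = mul (inv x) one := fun x => by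
    have h := l19 (inv x) one
    rw [l6 x] at h
    exact h
  have l27 : ∀ x, mul (mul (inv (mul (inv x) (mul (inv x) (inv x)))) (inv x))
      (mul (inv x) one) = x := fun x => by
    have h := l17 (inv x) x
    rw [h_inv_left] at h
    exact h
  have l28 : ∀ x w, mul (inv (inv (inv x))) w = mul (inv x) w := fun x w => by
    have h1 := h_c (inv (inv (inv x))) one w
    have h2 := h_c (inv x) one w
    rw [h_one_left, h_one_left] at h1
    rw [h_one_left, h_one_left] at h2
    rw [l20 x] at h1
    exact h1.trans h2.symm
  have l29 : ∀ x, mul (inv x) (inv (inv x)) = one := fun x => by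
    have h := h_inv_left (inv (inv x))
    rw [l28 x (inv (inv x))] at h
    exact h
  have l47 : ∀ x, inv (inv x) = x := fun x => by
    have h := l17 (inv x) (inv (inv x))
    rw [l29 x] at h
    exact h.symm.trans (l27 x)
  have l48 : ∀ x, mul x (inv x) = one := fun x => by
    have h := h_inv_left (inv x)
    rwa [l47] at h
  have l49 : ∀ x, mul x (mul (inv x) one) = one := fun x => by
    have h := l6 x
    rwa [l47] at h
  have l65 : ∀ x, mul (mul (inv (mul x (mul x x))) x) (mul x one) = inv x :=
    fun x => by
    have h := l17 x (inv x)
    rwa [l48] at h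
  have l94 : ∀ x, mul (inv x) one = inv x := fun x => by
    have h := l17 x (mul (inv x) one)
    rw [l49 x] at h
    rw [l65 x] at h
    exact h.symm
  have l95 : ∀ x, mul x one = x := fun x => by
    have h := l94 (inv x)
    rwa [l47] at h
  have l100 : ∀ x y, mul (mul x y) y = mul x (mul y y) := fun x y => by
    have h := h_c x y one
    rw [l95, l95] at h
    exact h.symm
  have l41 : ∀ x w, mul (mul (mul (inv x) one) x) w = mul (inv x) (mul x w) :=
    fun x w => by
    have h := l18 (inv x) x w
    rw [h_inv_left] at h
    rw [l4 x w] at h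
    exact h
  have l105 : ∀ x z, mul (inv x) (mul x z) = z := fun x z => by
    have h := l41 x z
    rw [l94, h_inv_left, h_one_left] at h
    exact h.symm
  have l106 : ∀ x z, mul x (mul (inv x) z) = z := fun x z => by
    have h := l105 (inv x) z
    rwa [l47] at h
  have l108 : ∀ x y, mul (inv (mul x y)) (mul x (mul y y)) = y := fun x y => by
    have h := l105 (mul x y) y
    rwa [l100] at h
  have l112 : ∀ x y z, mul (mul x (mul y y)) z = mul x (mul y (mul y z)) :=
    fun x y z => by
    rw [← l100 x y]
    exact (h_c x y z).symm
  have l156 : ∀ x y z, mul (inv (mul x (mul y (mul y z))))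
      (mul x (mul y (mul y (mul z z)))) = z := fun x y z => by
    have h := l108 (mul x (mul y y)) z
    rw [l112 x y z, l112 x y (mul z z)] at h
    exact h
  have l157 : ∀ x z, mul (inv (mul x (inv z))) x = z := fun x z => by
    have h := l156 x (inv z) z
    rw [h_inv_left z] at h
    rw [l94 z] at h
    rw [l105 z z] at h
    rw [h_inv_left z] at h
    rw [l95 x] at h
    exact h
  have l158 : ∀ x z, mul (mul x (inv z)) z = x := fun x z => by
    have h := l106 (mul x (inv z)) x
    rwa [l157 x z] at h
  have l159 : ∀ x y, mul (mul x y) (inv y) = x := fun x y => by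
    have h := l158 x (inv y)
    rwa [l47] at h
  refine ⟨l95, l48, fun a b => ⟨⟨mul (inv a) b, l106 a b, fun x hx => by
    rw [← hx, l105]⟩, ⟨mul b (inv a), l158 b a, fun y hy => by
    rw [← hy, l159]⟩⟩⟩
end

section
/- Let Q be a set with a binary operation ·, an element 1, and a map x ↦ x' such that 1·x = x·1 = x (1 is a two-sided neutral element) and x·x' = 1 (right inverses) for all x ∈ Q. If Q satisfies the left Bol identity (x·(y·x))·z = x·(y·(x·z)) for all x, y, z, then Q is a loop: every x' is a two-sided inverse of x (x'·x = 1 as well), and for all a, b the equations a·x = b and y·a = b have unique solutions. -/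
/-- A groupoid with a two-sided neutral element and right
inverses satisfying the left Bol identity is a loop, and the right inverses
are two-sided. -/
theorem stmt_19 {Q : Type*} (mul : Q → Q → Q) (one : Q) (inv : Q → Q)
    (h_one_left : ∀ x, mul one x = x) (h_one_right : ∀ x, mul x one = x)
    (h_inv_right : ∀ x, mul x (inv x) = one)
    (h_lb : ∀ x y z, mul (mul x (mul y x)) z = mul x (mul y (mul x z))) :
    (∀ x, mul (inv x) x = one) ∧
    (∀ a b : Q, (∃! x : Q, mul a x = b) ∧ (∃! y : Q, mul y a = b)) := by
  -- star: (x(yx))x' = xy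
  have star : ∀ x y, mul (mul x (mul y x)) (inv x) = mul x y := by
    intro x y
    rw [h_lb, h_inv_right, h_one_right]
  -- left inverse: x'x = 1
  have linv : ∀ x, mul (inv x) x = one := by
    intro x
    have h := star (inv x) x
    rw [h_inv_right, h_one_right] at h
    rw [← h, h_inv_right]
  -- K: x'((xx)(x'y)) = y
  have K : ∀ x y, mul (inv x) (mul (mul x x) (mul (inv x) y)) = y := by
    intro x y
    have h := h_lb (inv x) (mul x x) y
    have hx : mul (mul x x) (inv x) = x := by
      have h2 := h_lb x one (inv x)
      simp only [h_one_left, h_inv_right, h_one_right] at h2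
      exact h2
    rw [hx, linv, h_one_left] at h
    exact h.symm
  -- inv_inv: x'' = x
  have inv_inv : ∀ x, inv (inv x) = x := by
    intro x
    have h1 := K x x
    rw [linv, h_one_right] at h1
    have h2 := K x (inv (inv x))
    rw [h_inv_right, h_one_right] at h2
    exact h2.symm.trans h1
  -- AB: x(x'w) = w
  have ab : ∀ x w, mul x (mul (inv x) w) = w := by
    intro x w
    -- w = x ((x'x')(x w)) by K at inv x, using inv_inv
    have hk := K (inv x) w
    rw [inv_inv] at hk
    -- hk : x ((x'x')(x w)) = w
    have h3 := h_lb x (inv x) (mul (mul (inv x) (inv x)) (mul x w))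
    rw [linv, h_one_right, hk] at h3
    exact h3.symm
  -- BA: x'(x w) = w
  have ba : ∀ x w, mul (inv x) (mul x w) = w := by
    intro x w
    have h := ab (inv x) w
    rw [inv_inv] at h
    exact h
  refine ⟨linv, fun a b => ⟨⟨mul (inv a) b, ab a b, ?_⟩, ⟨mul (inv a) (mul (mul a b) (inv a)), ?_, ?_⟩⟩⟩
  · intro y hy
    rw [← hy, ba]
  · -- existence for y a = b : (a'((ab)a'))a = a'(ab) = b
    have h := star (inv a) (mul a b)
    rw [inv_inv] at h
    show mul (mul (inv a) (mul (mul a b) (inv a))) a = b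
    rw [h, ba]
  · intro y hy
    have h1 := star a y
    rw [hy] at h1
    -- so y = a'(a y) = a'((a b) a')
    have h2 : y = mul (inv a) (mul a y) := (ba a y).symm
    rw [h2, ← h1]
end
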